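/- arXiv:1805.03702 — 4 statements merged into one kernel-verified Lean document; each statement's English description precedes it below -/
import Mathlib

section
/- Fix t > 0. Suppose b : ℝ × (0,t) → ℝ is measurable, b_s := ‖b(·,s)‖_∞ < ∞ for each s ∈ (0,t), and s ↦ b_s/√s is integrable on [0,t]. Then the function f(x) := ∫₀^t ds ∫_{−∞}^∞ dy p_s(x−y) b(y,s) = ∫₀^t p_s ∗ b(·,s)(x) ds is C¹ on ℝ, and f′(x) = ∫₀^t p′_s ∗ b(·,s)(x) ds, where p′_s denotes the spatial derivative of the heat kernel. -/
open MeasureTheory Filter Set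
open scoped Topology

/-- The heat kernel `p_t(x) = (4πt)^{-1/2} exp(-x²/(4t))`. -/
noncomputable def heatKernel (t x : ℝ) : ℝ :=
  Real.exp (-(x ^ 2) / (4 * t)) / Real.sqrt (4 * Real.pi * t)

lemma heatKernel_nonneg (s x : ℝ) : 0 ≤ heatKernel s x :=
  div_nonneg (Real.exp_pos _).le (Real.sqrt_nonneg _)

lemma continuous_heatKernel (s : ℝ) : Continuous (heatKernel s) := by
  unfold heatKernel
  exact (Real.continuous_exp.comp ((continuous_pow 2).neg.div_const _)).div_const _

lemma hasDerivAt_heatKernel {s : ℝ} (hs : 0 < s) (w : ℝ) :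
    HasDerivAt (heatKernel s) (-(w / (2 * s)) * heatKernel s w) w := by
  have h1 : HasDerivAt (fun w : ℝ => -(w ^ 2) / (4 * s)) (-(2 * w) / (4 * s)) w := by
    simpa using ((hasDerivAt_pow 2 w).neg.div_const (4 * s))
  have h2 := (Real.hasDerivAt_exp (-(w ^ 2) / (4 * s))).comp w h1
  have h3 := h2.div_const (Real.sqrt (4 * Real.pi * s))
  refine h3.congr_deriv ?_
  unfold heatKernel
  have hs' : (s : ℝ) ≠ 0 := ne_of_gt hs
  field_simp
  ring

lemma heatKernel_eq (s : ℝ) :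
    heatKernel s = fun x => Real.exp (-(1 / (4 * s)) * x ^ 2) / Real.sqrt (4 * Real.pi * s) := by
  funext x
  unfold heatKernel
  congr 1
  ring

lemma integrable_heatKernel {s : ℝ} (hs : 0 < s) : Integrable (heatKernel s) := by
  rw [heatKernel_eq]
  exact (integrable_exp_neg_mul_sq (by positivity : (0:ℝ) < 1 / (4 * s))).div_const _

lemma integral_heatKernel {s : ℝ} (hs : 0 < s) : ∫ x, heatKernel s x = 1 := by
  rw [heatKernel_eq]
  rw [integral_div, integral_gaussian]
  rw [show Real.pi / (1 / (4 * s)) = 4 * Real.pi * s by field_simp]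
  rw [div_self (ne_of_gt (Real.sqrt_pos.2 (by positivity)))]

lemma integrable_abs_mul_gauss {c : ℝ} (hc : 0 < c) :
    Integrable fun x : ℝ => |x| * Real.exp (-c * x ^ 2) := by
  have := (integrable_mul_exp_neg_mul_sq hc).abs
  refine this.congr (Eventually.of_forall fun x => ?_)
  simp [abs_mul, abs_of_pos (Real.exp_pos _)]

lemma integral_Ioi_mul_gauss {c : ℝ} (hc : 0 < c) :
    ∫ x in Ioi (0:ℝ), x * Real.exp (-c * x ^ 2) = 1 / (2 * c) := by
  have hderiv : ∀ x ∈ Ici (0:ℝ),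
      HasDerivAt (fun x : ℝ => -Real.exp (-c * x ^ 2) / (2 * c))
        (x * Real.exp (-c * x ^ 2)) x := by
    intro x _
    have h1 : HasDerivAt (fun x : ℝ => -c * x ^ 2) (-c * (2 * x)) x := by
      simpa using ((hasDerivAt_pow 2 x).const_mul (-c))
    have h2 := ((Real.hasDerivAt_exp (-c * x ^ 2)).comp x h1).neg.div_const (2 * c)
    refine h2.congr_deriv ?_
    field_simp
  have htend : Tendsto (fun x : ℝ => -Real.exp (-c * x ^ 2) / (2 * c)) atTop (𝓝 0) := by
    have h1 : Tendsto (fun x : ℝ => -c * x ^ 2) atTop atBot :=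
      (tendsto_pow_atTop two_ne_zero).const_mul_atTop_of_neg (by linarith)
    have h2 := (Real.tendsto_exp_atBot.comp h1).neg.div_const (2 * c)
    simpa using h2
  have := integral_Ioi_of_hasDerivAt_of_tendsto' hderiv
    ((integrable_mul_exp_neg_mul_sq hc).integrableOn) htend
  rw [this]
  simp
  ring

lemma integral_abs_mul_gauss {c : ℝ} (hc : 0 < c) :
    ∫ x : ℝ, |x| * Real.exp (-c * x ^ 2) = 1 / c := by
  have h := integral_comp_abs (f := fun x : ℝ => x * Real.exp (-c * x ^ 2))
  simp only [sq_abs] at h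
  rw [h, integral_Ioi_mul_gauss hc]
  field_simp

lemma abs_deriv_hk {s : ℝ} (hs : 0 < s) (w : ℝ) :
    |(-(w / (2 * s)) * heatKernel s w)| =
      |w| * Real.exp (-(1 / (4 * s)) * w ^ 2) * (1 / (2 * s * Real.sqrt (4 * Real.pi * s))) := by
  rw [heatKernel_eq]
  have h1 : (0:ℝ) < Real.sqrt (4 * Real.pi * s) := Real.sqrt_pos.2 (by positivity)
  rw [abs_mul, abs_neg, abs_div, abs_of_pos (by positivity : (0:ℝ) < 2 * s),
    abs_of_pos (div_pos (Real.exp_pos _) h1)]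
  field_simp

lemma integrable_abs_deriv_hk {s : ℝ} (hs : 0 < s) :
    Integrable fun w : ℝ => |(-(w / (2 * s)) * heatKernel s w)| := by
  have := (integrable_abs_mul_gauss (by positivity : (0:ℝ) < 1 / (4 * s))).mul_const
    (1 / (2 * s * Real.sqrt (4 * Real.pi * s)))
  exact this.congr (Eventually.of_forall fun w => (abs_deriv_hk hs w).symm)

lemma integral_abs_deriv_hk {s : ℝ} (hs : 0 < s) :
    ∫ w : ℝ, |(-(w / (2 * s)) * heatKernel s w)| = 2 / Real.sqrt (4 * Real.pi * s) := by
  have h1 : (0:ℝ) < Real.sqrt (4 * Real.pi * s) := Real.sqrt_pos.2 (by positivity)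
  rw [integral_congr_ae (Eventually.of_forall fun w => abs_deriv_hk hs w)]
  rw [integral_mul_const, integral_abs_mul_gauss (by positivity : (0:ℝ) < 1 / (4 * s))]
  field_simp
  ring

lemma exp_estimate {s x x0 y : ℝ} (hs : 0 < s) (hx : |x - x0| ≤ 1) :
    Real.exp (-((x - y) ^ 2) / (4 * s)) ≤
      Real.exp (1 / (2 * s)) * Real.exp (-((x0 - y) ^ 2) / (8 * s)) := by
  rw [← Real.exp_add]
  apply Real.exp_le_exp.2
  rw [div_le_iff₀ (by positivity : (0:ℝ) < 4 * s)]
  have h2 : (x - x0) ^ 2 ≤ 1 := by nlinarith [abs_nonneg (x - x0), sq_abs (x - x0)]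
  have h3 : (1 / (2 * s) + -((x0 - y) ^ 2) / (8 * s)) * (4 * s)
      = 2 - (x0 - y) ^ 2 / 2 := by field_simp; ring
  rw [h3]
  nlinarith [sq_nonneg ((x0 - y) - 2 * (x - y))]

/-- Differentiating under the integral sign in the space variable, for a fixed time. -/
lemma inner_step {s : ℝ} (hs : 0 < s) (c : ℝ → ℝ) (hc : Measurable c)
    {M : ℝ} (hM : ∀ y, |c y| ≤ M) (x0 : ℝ) :
    HasDerivAt (fun x => ∫ y, heatKernel s (x - y) * c y)
      (∫ y, -((x0 - y) / (2 * s)) * heatKernel s (x0 - y) * c y) x0 ∧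
    ContinuousAt (fun x => ∫ y, -((x - y) / (2 * s)) * heatKernel s (x - y) * c y) x0 := by
  have hM0 : 0 ≤ M := le_trans (abs_nonneg _) (hM 0)
  have hc0 : (0:ℝ) < Real.sqrt (4 * Real.pi * s) := Real.sqrt_pos.2 (by positivity)
  set bound : ℝ → ℝ := fun y =>
    (|x0 - y| + 1) / (2 * s) *
      (Real.exp (1 / (2 * s)) * Real.exp (-((x0 - y) ^ 2) / (8 * s)) / Real.sqrt (4 * Real.pi * s))
      * M with hbound_def
  have bound_int : Integrable bound := by
    have h1 : Integrable (fun u : ℝ => (|u| + 1) * Real.exp (-(1 / (8 * s)) * u ^ 2)) := by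
      have ha := integrable_abs_mul_gauss (by positivity : (0:ℝ) < 1 / (8 * s))
      have hb := integrable_exp_neg_mul_sq (by positivity : (0:ℝ) < 1 / (8 * s))
      simpa [add_mul, Pi.add_def] using ha.add hb
    have h2 := (h1.comp_sub_left x0).mul_const
      (Real.exp (1 / (2 * s)) / Real.sqrt (4 * Real.pi * s) / (2 * s) * M)
    refine h2.congr (Eventually.of_forall fun y => ?_)
    simp only [hbound_def]
    rw [show -(1 / (8 * s)) * (x0 - y) ^ 2 = -((x0 - y) ^ 2) / (8 * s) by ring]
    field_simp
  have hb : ∀ y : ℝ, ∀ x ∈ Metric.ball x0 1,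
      ‖-((x - y) / (2 * s)) * heatKernel s (x - y) * c y‖ ≤ bound y := by
    intro y x hx
    have hx1 : |x - x0| ≤ 1 := le_of_lt (by simpa [Real.dist_eq] using hx)
    rw [Real.norm_eq_abs, abs_mul, abs_mul, abs_neg, abs_div,
      abs_of_pos (by positivity : (0:ℝ) < 2 * s),
      abs_of_nonneg (heatKernel_nonneg s (x - y))]
    simp only [hbound_def]
    unfold heatKernel
    have e1 : |x - y| ≤ |x0 - y| + 1 := by
      calc |x - y| = |(x0 - y) + (x - x0)| := by ring_nf
        _ ≤ |x0 - y| + |x - x0| := abs_add_le _ _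
        _ ≤ |x0 - y| + 1 := by linarith
    gcongr ?_ / _ * (?_ / _) * ?_
    · exact exp_estimate hs hx1
    · exact hM y
  have hmeas1 : ∀ x : ℝ, AEStronglyMeasurable (fun y => heatKernel s (x - y) * c y) volume :=
    fun x => (((continuous_heatKernel s).comp (continuous_const.sub continuous_id)).measurable.mul
      hc).aestronglyMeasurable
  have hmeas2 : ∀ x : ℝ,
      AEStronglyMeasurable (fun y => -((x - y) / (2 * s)) * heatKernel s (x - y) * c y) volume := by
    intro x
    have hcont : Continuous fun y : ℝ => -((x - y) / (2 * s)) * heatKernel s (x - y) :=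
      (((continuous_const.sub continuous_id).div_const _).neg).mul
        ((continuous_heatKernel s).comp (continuous_const.sub continuous_id))
    exact (hcont.measurable.mul hc).aestronglyMeasurable
  have hint0 : Integrable (fun y => heatKernel s (x0 - y) * c y) := by
    refine Integrable.mono' (((integrable_heatKernel hs).comp_sub_left x0).const_mul M)
      (hmeas1 x0) (Eventually.of_forall fun y => ?_)
    rw [Real.norm_eq_abs, abs_mul, abs_of_nonneg (heatKernel_nonneg s (x0 - y))]
    calc heatKernel s (x0 - y) * |c y| ≤ heatKernel s (x0 - y) * M :=
          mul_le_mul_of_nonneg_left (hM y) (heatKernel_nonneg s _)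
      _ = M * heatKernel s (x0 - y) := by ring
  have hdiff : ∀ y : ℝ, ∀ x ∈ Metric.ball x0 1,
      HasDerivAt (fun x => heatKernel s (x - y) * c y)
        (-((x - y) / (2 * s)) * heatKernel s (x - y) * c y) x := by
    intro y x _
    have h1 : HasDerivAt (fun x : ℝ => x - y) 1 x := (hasDerivAt_id x).sub_const y
    have h2 := ((hasDerivAt_heatKernel hs (x - y)).comp x h1).mul_const (c y)
    simpa using h2
  have key := hasDerivAt_integral_of_dominated_loc_of_deriv_le (Metric.ball_mem_nhds _ one_pos)
    (Eventually.of_forall hmeas1) hint0 (hmeas2 x0)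
    (Eventually.of_forall fun y => hb y) bound_int
    (Eventually.of_forall fun y => hdiff y)
  refine ⟨key.2, ?_⟩
  refine continuousAt_of_dominated (Eventually.of_forall hmeas2) ?_ bound_int ?_
  · filter_upwards [Metric.ball_mem_nhds x0 one_pos] with x hx
    exact Eventually.of_forall fun y => hb y x hx
  · refine Eventually.of_forall fun y => ?_
    have hcont : Continuous fun x : ℝ => -((x - y) / (2 * s)) * heatKernel s (x - y) * c y :=
      ((((continuous_id.sub continuous_const).div_const _).neg).mul
        ((continuous_heatKernel s).comp (continuous_id.sub continuous_const))).mul continuous_const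
    exact hcont.continuousAt

set_option maxHeartbeats 4000000 in
theorem statement_9 (t : ℝ) (ht : 0 < t) (b : ℝ → ℝ → ℝ)
    (hbmeas : Measurable fun p : ℝ × ℝ => b p.1 p.2)
    (hbdd : ∀ s ∈ Set.Ioo (0 : ℝ) t, BddAbove (Set.range fun y => |b y s|))
    (hint : IntegrableOn (fun s => (⨆ y, |b y s|) / Real.sqrt s) (Set.Ioo 0 t)) :
    ContDiff ℝ 1 (fun x => ∫ s in Set.Ioc (0 : ℝ) t, ∫ y, heatKernel s (x - y) * b y s) ∧
    ∀ x, deriv (fun x => ∫ s in Set.Ioc (0 : ℝ) t, ∫ y, heatKernel s (x - y) * b y s) x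
      = ∫ s in Set.Ioc (0 : ℝ) t, ∫ y, deriv (heatKernel s) (x - y) * b y s := by
  set B : ℝ → ℝ := fun s => ⨆ y, |b y s| with hBdef
  have hbs : ∀ s : ℝ, Measurable fun y => b y s := fun s =>
    hbmeas.comp (measurable_id.prodMk measurable_const)
  have hBle : ∀ s ∈ Ioo (0:ℝ) t, ∀ y, |b y s| ≤ B s := fun s hs y => le_ciSup (hbdd s hs) y
  have hB0 : ∀ s ∈ Ioo (0:ℝ) t, 0 ≤ B s := fun s hs =>
    le_trans (abs_nonneg _) (hBle s hs 0)
  have haemem : ∀ᵐ s ∂(volume.restrict (Ioo (0:ℝ) t)), s ∈ Ioo (0:ℝ) t :=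
    ae_restrict_mem measurableSet_Ioo
  -- B is a.e. strongly measurable on Ioo
  have hBmeas : AEStronglyMeasurable B (volume.restrict (Ioo (0:ℝ) t)) := by
    have h1 : AEStronglyMeasurable (fun s => Real.sqrt s * (B s / Real.sqrt s))
        (volume.restrict (Ioo (0:ℝ) t)) :=
      (Real.continuous_sqrt.aestronglyMeasurable.restrict).mul hint.1
    refine h1.congr ?_
    filter_upwards [haemem] with s hs
    rw [mul_comm, div_mul_cancel₀ _ (ne_of_gt (Real.sqrt_pos.2 hs.1))]
  have hBint : IntegrableOn B (Ioo (0:ℝ) t) := by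
    refine Integrable.mono' (hint.const_mul (Real.sqrt t)) hBmeas ?_
    filter_upwards [haemem] with s hs
    rw [Real.norm_eq_abs, abs_of_nonneg (hB0 s hs)]
    have hq : 0 ≤ B s / Real.sqrt s := div_nonneg (hB0 s hs) (Real.sqrt_nonneg s)
    calc B s = Real.sqrt s * (B s / Real.sqrt s) := by
          rw [mul_comm, div_mul_cancel₀ _ (ne_of_gt (Real.sqrt_pos.2 hs.1))]
      _ ≤ Real.sqrt t * (B s / Real.sqrt s) :=
          mul_le_mul_of_nonneg_right (Real.sqrt_le_sqrt hs.2.le) hq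
  -- measurability of the heat kernel in both variables
  have hK : Measurable fun p : ℝ × ℝ => heatKernel p.1 p.2 := by
    unfold heatKernel
    exact (((measurable_snd.pow_const 2).neg.div (measurable_fst.const_mul 4)).exp).div
      ((measurable_fst.const_mul (4 * Real.pi)).sqrt)
  have hsm : ∀ x : ℝ, AEStronglyMeasurable (fun s => ∫ y, heatKernel s (x - y) * b y s)
      (volume.restrict (Ioo (0:ℝ) t)) := by
    intro x
    have hm : Measurable fun p : ℝ × ℝ => heatKernel p.1 (x - p.2) * b p.2 p.1 :=
      (hK.comp (measurable_fst.prodMk (measurable_const.sub measurable_snd))).mul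
        (hbmeas.comp (measurable_snd.prodMk measurable_fst))
    exact (hm.stronglyMeasurable.integral_prod_right').aestronglyMeasurable.restrict
  have hsm' : ∀ x : ℝ,
      AEStronglyMeasurable (fun s => ∫ y, -((x - y) / (2 * s)) * heatKernel s (x - y) * b y s)
      (volume.restrict (Ioo (0:ℝ) t)) := by
    intro x
    have hm : Measurable fun p : ℝ × ℝ =>
        -((x - p.2) / (2 * p.1)) * heatKernel p.1 (x - p.2) * b p.2 p.1 :=
      ((((measurable_const.sub measurable_snd).div (measurable_fst.const_mul 2)).neg).mul
        (hK.comp (measurable_fst.prodMk (measurable_const.sub measurable_snd)))).mul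
        (hbmeas.comp (measurable_snd.prodMk measurable_fst))
    exact (hm.stronglyMeasurable.integral_prod_right').aestronglyMeasurable.restrict
  -- integrability of F x over Ioo
  have hFint : ∀ x : ℝ,
      IntegrableOn (fun s => ∫ y, heatKernel s (x - y) * b y s) (Ioo (0:ℝ) t) := by
    intro x
    refine Integrable.mono' hBint (hsm x) ?_
    filter_upwards [haemem] with s hs
    calc ‖∫ y, heatKernel s (x - y) * b y s‖
        ≤ ∫ y, B s * heatKernel s (x - y) := by
          refine norm_integral_le_of_norm_le
            (((integrable_heatKernel hs.1).comp_sub_left x).const_mul (B s))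
            (Eventually.of_forall fun y => ?_)
          rw [Real.norm_eq_abs, abs_mul, abs_of_nonneg (heatKernel_nonneg s (x - y))]
          calc heatKernel s (x - y) * |b y s| ≤ heatKernel s (x - y) * B s :=
                mul_le_mul_of_nonneg_left (hBle s hs y) (heatKernel_nonneg s _)
            _ = B s * heatKernel s (x - y) := by ring
      _ = B s := by
          rw [integral_const_mul, integral_sub_left_eq_self (heatKernel s) volume x,
            integral_heatKernel hs.1, mul_one]
  -- uniform bound on the derivative in s
  have hF'bound : ∀ᵐ s ∂(volume.restrict (Ioo (0:ℝ) t)), ∀ x : ℝ,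
      ‖∫ y, -((x - y) / (2 * s)) * heatKernel s (x - y) * b y s‖
        ≤ 2 / Real.sqrt (4 * Real.pi) * (B s / Real.sqrt s) := by
    filter_upwards [haemem] with s hs x
    have h1 : Integrable fun y => B s * |(-((x - y) / (2 * s)) * heatKernel s (x - y))| :=
      ((integrable_abs_deriv_hk hs.1).comp_sub_left x).const_mul (B s)
    calc ‖∫ y, -((x - y) / (2 * s)) * heatKernel s (x - y) * b y s‖
        ≤ ∫ y, B s * |(-((x - y) / (2 * s)) * heatKernel s (x - y))| := by
          refine norm_integral_le_of_norm_le h1 (Eventually.of_forall fun y => ?_)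
          rw [Real.norm_eq_abs, abs_mul]
          calc |(-((x - y) / (2 * s)) * heatKernel s (x - y))| * |b y s|
              ≤ |(-((x - y) / (2 * s)) * heatKernel s (x - y))| * B s :=
                mul_le_mul_of_nonneg_left (hBle s hs y) (abs_nonneg _)
            _ = B s * |(-((x - y) / (2 * s)) * heatKernel s (x - y))| := by ring
      _ = B s * (2 / Real.sqrt (4 * Real.pi * s)) := by
          rw [integral_const_mul,
            integral_sub_left_eq_self (fun w => |(-(w / (2 * s)) * heatKernel s w)|) volume x,
            integral_abs_deriv_hk hs.1]
      _ = 2 / Real.sqrt (4 * Real.pi) * (B s / Real.sqrt s) := by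
          rw [Real.sqrt_mul (by positivity : (0:ℝ) ≤ 4 * Real.pi) s]
          have h2 : Real.sqrt (4 * Real.pi) ≠ 0 := ne_of_gt (Real.sqrt_pos.2 (by positivity))
          have h3 : Real.sqrt s ≠ 0 := ne_of_gt (Real.sqrt_pos.2 hs.1)
          field_simp
  -- the outer derivative
  have houter : ∀ x0 : ℝ,
      HasDerivAt (fun x => ∫ s in Ioo (0:ℝ) t, ∫ y, heatKernel s (x - y) * b y s)
        (∫ s in Ioo (0:ℝ) t, ∫ y, -((x0 - y) / (2 * s)) * heatKernel s (x0 - y) * b y s) x0 := by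
    intro x0
    have key := hasDerivAt_integral_of_dominated_loc_of_deriv_le (Metric.ball_mem_nhds _ one_pos)
      (Eventually.of_forall hsm) (hFint x0) (hsm' x0)
      (by filter_upwards [hF'bound] with s h x _; exact h x)
      (hint.const_mul (2 / Real.sqrt (4 * Real.pi)))
      (by filter_upwards [haemem] with s hs
          intro x _
          exact (inner_step hs.1 (fun y => b y s) (hbs s) (hBle s hs) x).1)
    exact key.2
  -- continuity of the derivative
  have hcontF' : Continuous fun x =>
      ∫ s in Ioo (0:ℝ) t, ∫ y, -((x - y) / (2 * s)) * heatKernel s (x - y) * b y s := by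
    rw [continuous_iff_continuousAt]
    intro x0
    refine continuousAt_of_dominated (Eventually.of_forall hsm') ?_
      (hint.const_mul (2 / Real.sqrt (4 * Real.pi))) ?_
    · refine Eventually.of_forall fun x => ?_
      filter_upwards [hF'bound] with s h
      exact h x
    · filter_upwards [haemem] with s hs
      exact (inner_step hs.1 (fun y => b y s) (hbs s) (hBle s hs) x0).2
  have hmain : (fun x => ∫ s in Ioc (0:ℝ) t, ∫ y, heatKernel s (x - y) * b y s)
      = fun x => ∫ s in Ioo (0:ℝ) t, ∫ y, heatKernel s (x - y) * b y s :=
    funext fun x => integral_Ioc_eq_integral_Ioo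
  rw [hmain]
  constructor
  · rw [contDiff_one_iff_deriv]
    refine ⟨fun x => (houter x).differentiableAt, ?_⟩
    have hde : deriv (fun x => ∫ s in Ioo (0:ℝ) t, ∫ y, heatKernel s (x - y) * b y s)
        = fun x => ∫ s in Ioo (0:ℝ) t, ∫ y, -((x - y) / (2 * s)) * heatKernel s (x - y) * b y s :=
      funext fun x => (houter x).deriv
    rw [hde]
    exact hcontF'
  · intro x
    rw [(houter x).deriv, integral_Ioc_eq_integral_Ioo]
    refine integral_congr_ae ?_
    filter_upwards [haemem] with s hs
    refine integral_congr_ae (Eventually.of_forall fun y => ?_)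
    show -((x - y) / (2 * s)) * heatKernel s (x - y) * b y s
        = deriv (heatKernel s) (x - y) * b y s
    rw [(hasDerivAt_heatKernel hs.1 (x - y)).deriv]
end

section
/- Let v : ℝ → [0,1] be a non-increasing function with v(x) → 0 as x → ∞ and v(x) → 1 as x → −∞, and let (u, μ) be a classical solution of (FBP) with initial condition v. Then for every t > 0, μ_t = inf{x ∈ ℝ : u(x,t) < 1}. -/
open MeasureTheory Filter Set
open scoped Topology

/-- Spatial derivative `∂_x u`. -/
noncomputable def dX (u : ℝ → ℝ → ℝ) (x t : ℝ) : ℝ := deriv (fun y => u y t) x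

/-- Second spatial derivative `∂²_x u`. -/
noncomputable def dXX (u : ℝ → ℝ → ℝ) (x t : ℝ) : ℝ := deriv (fun y => dX u y t) x

/-- Time derivative `∂_t u`. -/
noncomputable def dT (u : ℝ → ℝ → ℝ) (x t : ℝ) : ℝ := deriv (fun s => u x s) t

/-- `(u, μ)` is a classical solution of the free boundary problem (FBP) with initial
condition `v`:  `μ_t ∈ ℝ` with `t ↦ μ_t` continuous on `(0,∞)`; `u` takes values in `[0,1]`
and is continuous on `ℝ × (0,∞)`, is `C^{2,1}` on `{(x,t) : t > 0, x > μ_t}` where it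
satisfies `∂_t u = ∂²_x u + u`; `u(x,t) = 1` for `x ≤ μ_t`; `∂_x u(μ_t,t) = 0`; and
`u(·,t) → v` in `L¹_loc` as `t ↓ 0`. -/
def IsFBPSolution (v : ℝ → ℝ) (u : ℝ → ℝ → ℝ) (μ : ℝ → ℝ) : Prop :=
  ContinuousOn μ (Set.Ioi 0) ∧
  (∀ x t, 0 < t → u x t ∈ Set.Icc (0 : ℝ) 1) ∧
  ContinuousOn (fun p : ℝ × ℝ => u p.1 p.2) {p : ℝ × ℝ | 0 < p.2} ∧
  (∀ x t, 0 < t → μ t < x →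
    DifferentiableAt ℝ (fun y => u y t) x ∧
    DifferentiableAt ℝ (fun y => dX u y t) x ∧
    DifferentiableAt ℝ (fun s => u x s) t) ∧
  ContinuousOn (fun p : ℝ × ℝ => dX u p.1 p.2) {p : ℝ × ℝ | 0 < p.2 ∧ μ p.2 < p.1} ∧
  ContinuousOn (fun p : ℝ × ℝ => dXX u p.1 p.2) {p : ℝ × ℝ | 0 < p.2 ∧ μ p.2 < p.1} ∧
  ContinuousOn (fun p : ℝ × ℝ => dT u p.1 p.2) {p : ℝ × ℝ | 0 < p.2 ∧ μ p.2 < p.1} ∧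
  (∀ x t, 0 < t → μ t < x → dT u x t = dXX u x t + u x t) ∧
  (∀ x t, 0 < t → x ≤ μ t → u x t = 1) ∧
  (∀ t, 0 < t → HasDerivAt (fun y => u y t) 0 (μ t)) ∧
  (∀ A : ℝ, 0 < A →
    Tendsto (fun t => ∫ x in Set.Icc (-A) A, |u x t - v x|) (𝓝[>] (0 : ℝ)) (𝓝 0))

/-- `μ₀ = inf {x : v x < 1} ∈ ℝ ∪ {-∞}`, as an extended real number. -/
noncomputable def muZero (v : ℝ → ℝ) : EReal :=
  sInf ((fun x : ℝ => (x : EReal)) '' {x : ℝ | v x < 1})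

theorem statement_15 (v : ℝ → ℝ)
    (hv01 : ∀ x, v x ∈ Set.Icc (0 : ℝ) 1)
    (hvmono : Antitone v)
    (hvtop : Tendsto v atTop (𝓝 0))
    (hvbot : Tendsto v atBot (𝓝 1))
    (u : ℝ → ℝ → ℝ) (μ : ℝ → ℝ)
    (hsol : IsFBPSolution v u μ) :
    ∀ t, 0 < t →
      {x : ℝ | u x t < 1}.Nonempty ∧ BddBelow {x : ℝ | u x t < 1} ∧
      μ t = sInf {x : ℝ | u x t < 1} := by
  obtain ⟨hμc, hbound, hc, hdiff, hdX, hdXX, hdT, hpde, hleft, hneu, hinit⟩ := hsol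
  have key : ∀ t, 0 < t → ∀ U : Set ℝ, IsOpen U → ∀ x ∈ U, μ t < x →
      (∀ y ∈ U, u y t = 1) → False := by
    intro t ht U hU x hxU hμx hone
    have hdXzero : ∀ y ∈ U, dX u y t = 0 := by
      intro y hy
      have h1 : (fun z => u z t) =ᶠ[𝓝 y] fun _ => (1 : ℝ) :=
        Filter.eventuallyEq_of_mem (hU.mem_nhds hy) fun z hz => hone z hz
      simpa [dX] using h1.deriv_eq.trans (deriv_const y 1)
    have hXX : dXX u x t = 0 := by
      have h2 : (fun y => dX u y t) =ᶠ[𝓝 x] fun _ => (0 : ℝ) :=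
        Filter.eventuallyEq_of_mem (hU.mem_nhds hxU) fun z hz => hdXzero z hz
      simpa [dXX] using h2.deriv_eq.trans (deriv_const x 0)
    have hT : dT u x t = 0 := by
      have hmax : IsLocalMax (fun s => u x s) t := by
        have h1 : ∀ᶠ s in 𝓝 t, 0 < s := eventually_gt_nhds ht
        filter_upwards [h1] with s hs
        show u x s ≤ u x t
        rw [hone x hxU]
        exact (hbound x s hs).2
      simpa [dT] using hmax.deriv_eq_zero
    have heq := hpde x t ht hμx
    rw [hT, hXX, hone x hxU] at heq
    linarith
  intro t ht
  have hsub : {x : ℝ | u x t < 1} ⊆ Set.Ioi (μ t) := by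
    intro x hx
    by_contra hxle
    rw [Set.mem_Ioi, not_lt] at hxle
    have := hleft x t ht hxle
    simp only [Set.mem_setOf_eq, this] at hx
    exact lt_irrefl 1 hx
  have hbdd : BddBelow {x : ℝ | u x t < 1} := ⟨μ t, fun x hx => le_of_lt (hsub hx)⟩
  have hne : {x : ℝ | u x t < 1}.Nonempty := by
    by_contra hempty
    have hall : ∀ y, u y t = 1 := by
      intro y
      refine le_antisymm (hbound y t ht).2 (not_lt.1 fun h => hempty ⟨y, h⟩)
    exact key t ht Set.univ isOpen_univ (μ t + 1) trivial (by linarith) fun y _ => hall y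
  refine ⟨hne, hbdd, ?_⟩
  have hge : μ t ≤ sInf {x : ℝ | u x t < 1} :=
    le_csInf hne fun x hx => le_of_lt (hsub hx)
  have hle : sInf {x : ℝ | u x t < 1} ≤ μ t := by
    by_contra h
    push_neg at h
    set S := sInf {x : ℝ | u x t < 1} with hS
    have hone : ∀ y ∈ Set.Ioo (μ t) S, u y t = 1 := by
      intro y hy
      have hmem : y ∉ {x : ℝ | u x t < 1} :=
        fun hmem => absurd (csInf_le hbdd hmem) (not_le.2 hy.2)
      exact le_antisymm (hbound y t ht).2 (not_lt.1 hmem)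
    exact key t ht (Set.Ioo (μ t) S) isOpen_Ioo ((μ t + S) / 2)
      ⟨by linarith, by linarith⟩ (by linarith) hone
  linarith
end

section
/- Let v : ℝ → [0,1] be a non-increasing function with v(x) → 0 as x → ∞ and v(x) → 1 as x → −∞, with μ₀ := inf{x ∈ ℝ : v(x) < 1} ∈ ℝ ∪ {−∞}. Then for every δ > 0, every integer n ≥ 0 and every A ≥ 1/2, one has ∫_{−A}^{A} |u^{n,δ,+}(x) − u^{n,δ,−}(x)| dx ≤ 4A(1 + e^{δn})(e^δ − 1). -/
open MeasureTheory Filter Set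
open scoped Topology

/-- The heat semigroup `G_t f = p_t ∗ f`. -/
noncomputable def Gop (t : ℝ) (f : ℝ → ℝ) (x : ℝ) : ℝ := ∫ y, heatKernel t (x - y) * f y

/-- The cut operator `C_m f = min(f, m)`. -/
def Cop (m : ℝ) (f : ℝ → ℝ) (x : ℝ) : ℝ := min (f x) m

/-- `u^{n,δ,-} = [e^δ G_δ C_{e^{-δ}}]ⁿ v`. -/
noncomputable def uLower (v : ℝ → ℝ) (δ : ℝ) : ℕ → ℝ → ℝ
  | 0 => v
  | n + 1 => fun x => Real.exp δ * Gop δ (Cop (Real.exp (-δ)) (uLower v δ n)) x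

/-- `u^{n,δ,+} = [C₁ e^δ G_δ]ⁿ v⁺`. -/
noncomputable def uUpper (vplus : ℝ → ℝ) (δ : ℝ) : ℕ → ℝ → ℝ
  | 0 => vplus
  | n + 1 => Cop 1 (fun x => Real.exp δ * Gop δ (uUpper vplus δ n) x)

namespace S17

lemma hk_nonneg (t x : ℝ) : 0 ≤ heatKernel t x :=
  div_nonneg (Real.exp_nonneg _) (Real.sqrt_nonneg _)

lemma hk_eq (t : ℝ) :
    heatKernel t = fun x => Real.exp (-(1/(4*t)) * x ^ 2) / Real.sqrt (4 * Real.pi * t) := by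
  funext x
  unfold heatKernel
  congr 1
  ring_nf

lemma hk_integrable {t : ℝ} (ht : 0 < t) : Integrable (heatKernel t) := by
  rw [hk_eq t]
  exact (integrable_exp_neg_mul_sq (by positivity)).div_const _

lemma hk_integral {t : ℝ} (ht : 0 < t) : ∫ x, heatKernel t x = 1 := by
  rw [hk_eq t]
  rw [integral_div, integral_gaussian]
  rw [show Real.pi / (1/(4*t)) = 4 * Real.pi * t by field_simp]
  exact div_self (ne_of_gt (Real.sqrt_pos.mpr (by positivity)))

lemma hk_shift_integrable {t : ℝ} (ht : 0 < t) (x : ℝ) :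
    Integrable (fun y => heatKernel t (x - y)) :=
  (hk_integrable ht).comp_sub_left x

/-- `f` is antitone with values in `[0, c]`. -/
def Nice (c : ℝ) (f : ℝ → ℝ) : Prop := Antitone f ∧ ∀ x, 0 ≤ f x ∧ f x ≤ c

lemma Nice.measurable {c : ℝ} {f : ℝ → ℝ} (h : Nice c f) : Measurable f :=
  h.1.measurable

lemma Nice.mono {c c' : ℝ} {f : ℝ → ℝ} (h : Nice c f) (hcc : c ≤ c') : Nice c' f :=
  ⟨h.1, fun x => ⟨(h.2 x).1, (h.2 x).2.trans hcc⟩⟩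

/-- The basic integrability of the integrand of `Gop`. -/
lemma integrand_integrable {t : ℝ} (ht : 0 < t) {f : ℝ → ℝ} {c : ℝ}
    (hf : Nice c f) (x : ℝ) :
    Integrable (fun y => heatKernel t (x - y) * f y) := by
  have h := (hk_shift_integrable ht x).bdd_mul
    (f := f) (c := c) hf.measurable.aestronglyMeasurable
    (Filter.Eventually.of_forall fun y => by
      rw [Real.norm_eq_abs, abs_of_nonneg (hf.2 y).1]; exact (hf.2 y).2)
  simpa [mul_comm] using h

lemma integrand_integrable' {t : ℝ} (ht : 0 < t) {f : ℝ → ℝ} {c : ℝ}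
    (hf : Nice c f) (x : ℝ) :
    Integrable (fun z => heatKernel t z * f (x - z)) := by
  have hmeas : AEStronglyMeasurable (fun z => f (x - z)) volume :=
    (hf.measurable.comp (measurable_const.sub measurable_id)).aestronglyMeasurable
  have h := (hk_integrable ht).bdd_mul (f := fun z => f (x - z)) (c := c) hmeas
    (Filter.Eventually.of_forall fun y => by
      rw [Real.norm_eq_abs, abs_of_nonneg (hf.2 _).1]; exact (hf.2 _).2)
  simpa [mul_comm] using h

lemma Gop_rep {t : ℝ} {f : ℝ → ℝ} (x : ℝ) :
    Gop t f x = ∫ z, heatKernel t z * f (x - z) := by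
  have h := MeasureTheory.integral_sub_left_eq_self
    (fun y => heatKernel t (x - y) * f y) volume x
  simp only [sub_sub_cancel] at h
  rw [Gop, ← h]

lemma Gop_nonneg {t : ℝ} {f : ℝ → ℝ} (h0 : ∀ y, 0 ≤ f y) (x : ℝ) :
    0 ≤ Gop t f x :=
  integral_nonneg fun y => mul_nonneg (hk_nonneg _ _) (h0 y)

lemma Gop_le {t : ℝ} (ht : 0 < t) {f : ℝ → ℝ} {c : ℝ} (hf : Nice c f) (x : ℝ) :
    Gop t f x ≤ c := by
  have hc : 0 ≤ c := le_trans (hf.2 0).1 (hf.2 0).2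
  have h1 : Gop t f x ≤ ∫ y, heatKernel t (x - y) * c := by
    apply integral_mono (integrand_integrable ht hf x)
      ((hk_shift_integrable ht x).mul_const c)
    exact fun y => mul_le_mul_of_nonneg_left (hf.2 y).2 (hk_nonneg _ _)
  have h2 : ∫ y, heatKernel t (x - y) * c = c := by
    rw [integral_mul_const, MeasureTheory.integral_sub_left_eq_self (heatKernel t) volume x,
      hk_integral ht, one_mul]
  linarith

lemma Gop_mono {t : ℝ} (ht : 0 < t) {f g : ℝ → ℝ} {c c' : ℝ}
    (hf : Nice c f) (hg : Nice c' g) (h : ∀ y, f y ≤ g y) (x : ℝ) :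
    Gop t f x ≤ Gop t g x := by
  apply integral_mono (integrand_integrable ht hf x) (integrand_integrable ht hg x)
  exact fun y => mul_le_mul_of_nonneg_left (h y) (hk_nonneg _ _)

lemma Gop_antitone {t : ℝ} (ht : 0 < t) {f : ℝ → ℝ} {c : ℝ} (hf : Nice c f) :
    Antitone (Gop t f) := by
  intro x1 x2 h
  rw [Gop_rep, Gop_rep]
  apply integral_mono (integrand_integrable' ht hf x2) (integrand_integrable' ht hf x1)
  intro z
  exact mul_le_mul_of_nonneg_left (hf.1 (by linarith : x1 - z ≤ x2 - z)) (hk_nonneg _ _)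

lemma Gop_const_mul {t : ℝ} {f : ℝ → ℝ} (a x : ℝ) :
    Gop t (fun y => a * f y) x = a * Gop t f x := by
  unfold Gop
  rw [← integral_const_mul]
  congr 1
  funext y
  ring

lemma Gop_add_const {t : ℝ} (ht : 0 < t) {f : ℝ → ℝ} {c : ℝ} (hf : Nice c f) (a : ℝ)
    (x : ℝ) : Gop t (fun y => f y + a) x = Gop t f x + a := by
  unfold Gop
  have : (fun y => heatKernel t (x - y) * (f y + a))
      = fun y => heatKernel t (x - y) * f y + heatKernel t (x - y) * a := by
    funext y; ring
  rw [this, integral_add (integrand_integrable ht hf x) ((hk_shift_integrable ht x).mul_const a),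
    integral_mul_const, MeasureTheory.integral_sub_left_eq_self (heatKernel t) volume x,
    hk_integral ht, one_mul]

lemma Gop_shift {t : ℝ} {f : ℝ → ℝ} (s x : ℝ) :
    Gop t (fun y => f (y - s)) x = Gop t f (x - s) := by
  unfold Gop
  have h := MeasureTheory.integral_add_right_eq_self (μ := volume)
    (fun y => heatKernel t (x - y) * f (y - s)) s
  rw [← h]
  congr 1
  funext y
  rw [show x - (y + s) = x - s - y by ring, add_sub_cancel_right]



section Iterates

variable {δ : ℝ}

lemma Cop_nice {f : ℝ → ℝ} {c m : ℝ} (hf : Nice c f) (hm : 0 ≤ m) :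
    Nice m (Cop m f) := by
  constructor
  · intro x y hxy
    exact min_le_min (hf.1 hxy) le_rfl
  · intro x
    exact ⟨le_min (hf.2 x).1 hm, min_le_right _ _⟩

lemma uLower_nice (hδ : 0 < δ) {v : ℝ → ℝ} (hv : Nice 1 v) : ∀ n, Nice 1 (uLower v δ n) := by
  intro n
  induction n with
  | zero => exact hv
  | succ n ih =>
    have hcut : Nice (Real.exp (-δ)) (Cop (Real.exp (-δ)) (uLower v δ n)) :=
      Cop_nice ih (Real.exp_nonneg _)
    constructor
    · intro x y hxy
      exact mul_le_mul_of_nonneg_left (Gop_antitone hδ hcut hxy) (Real.exp_nonneg δ)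
    · intro x
      constructor
      · exact mul_nonneg (Real.exp_nonneg δ) (Gop_nonneg (fun y => (hcut.2 y).1) x)
      · have h1 : Gop δ (Cop (Real.exp (-δ)) (uLower v δ n)) x ≤ Real.exp (-δ) :=
          Gop_le hδ hcut x
        calc Real.exp δ * Gop δ (Cop (Real.exp (-δ)) (uLower v δ n)) x
            ≤ Real.exp δ * Real.exp (-δ) :=
              mul_le_mul_of_nonneg_left h1 (Real.exp_nonneg δ)
          _ = 1 := by rw [← Real.exp_add, add_neg_cancel, Real.exp_zero]

lemma uUpper_nice (hδ : 0 < δ) {w : ℝ → ℝ} (hw : Nice 1 w) : ∀ n, Nice 1 (uUpper w δ n) := by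
  intro n
  induction n with
  | zero => exact hw
  | succ n ih =>
    constructor
    · intro x y hxy
      exact min_le_min
        (mul_le_mul_of_nonneg_left (Gop_antitone hδ ih hxy) (Real.exp_nonneg δ)) le_rfl
    · intro x
      exact ⟨le_min (mul_nonneg (Real.exp_nonneg δ) (Gop_nonneg (fun y => (ih.2 y).1) x))
        zero_le_one, min_le_right _ _⟩

lemma exp_mul_exp_neg : Real.exp δ * Real.exp (-δ) = 1 := by
  rw [← Real.exp_add, add_neg_cancel, Real.exp_zero]

/-- Key sandwich: `a_n ≤ b_n ≤ min 1 (e^δ a_n)` where `b_n = uUpper v`, `a_n = uLower v`. -/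
lemma sandwich (hδ : 0 < δ) {v : ℝ → ℝ} (hv : Nice 1 v) :
    ∀ n x, uLower v δ n x ≤ uUpper v δ n x ∧
      uUpper v δ n x ≤ min 1 (Real.exp δ * uLower v δ n x) := by
  intro n
  induction n with
  | zero =>
    intro x
    refine ⟨le_rfl, le_min (hv.2 x).2 ?_⟩
    show v x ≤ Real.exp δ * v x
    nlinarith [Real.one_le_exp (le_of_lt hδ), (hv.2 x).1]
  | succ n ih =>
    intro x
    have ha := uLower_nice hδ hv n
    have hb := uUpper_nice hδ hv n
    have hcut : Nice (Real.exp (-δ)) (Cop (Real.exp (-δ)) (uLower v δ n)) :=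
      Cop_nice ha (Real.exp_nonneg _)
    have ha' := uLower_nice hδ hv (n+1)
    -- notation
    have hLsucc : uLower v δ (n+1) x
        = Real.exp δ * Gop δ (Cop (Real.exp (-δ)) (uLower v δ n)) x := rfl
    have hUsucc : uUpper v δ (n+1) x
        = min (Real.exp δ * Gop δ (uUpper v δ n) x) 1 := rfl
    constructor
    · -- lower ≤ upper
      rw [hLsucc, hUsucc]
      refine le_min ?_ (ha'.2 x).2
      apply mul_le_mul_of_nonneg_left _ (Real.exp_nonneg δ)
      have hle1 : Real.exp (-δ) ≤ 1 := Real.exp_le_one_iff.mpr (by linarith)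
      apply Gop_mono hδ (hcut.mono hle1) hb
      intro y
      exact le_trans (min_le_left _ _) (ih y).1
    · -- upper ≤ min 1 (E * lower)
      rw [hUsucc, hLsucc]
      refine le_min (min_le_right _ _) ?_
      have key : ∀ y, uUpper v δ n y ≤ Real.exp δ * Cop (Real.exp (-δ)) (uLower v δ n) y := by
        intro y
        have h2 := (ih y).2
        unfold Cop
        rcases le_total (uLower v δ n y) (Real.exp (-δ)) with h | h
        · rw [min_eq_left h]
          exact le_trans h2 (min_le_right _ _)
        · rw [min_eq_right h]
          rw [exp_mul_exp_neg]
          exact le_trans h2 (min_le_left _ _)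
      have hEcut : Nice 1 (fun y => Real.exp δ * Cop (Real.exp (-δ)) (uLower v δ n) y) := by
        constructor
        · intro x' y' h
          exact mul_le_mul_of_nonneg_left (min_le_min (ha.1 h) le_rfl) (Real.exp_nonneg δ)
        · intro y
          refine ⟨mul_nonneg (Real.exp_nonneg δ) (hcut.2 y).1, ?_⟩
          calc Real.exp δ * Cop (Real.exp (-δ)) (uLower v δ n) y
              ≤ Real.exp δ * Real.exp (-δ) :=
                mul_le_mul_of_nonneg_left (hcut.2 y).2 (Real.exp_nonneg δ)
            _ = 1 := exp_mul_exp_neg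
      have h3 : Gop δ (uUpper v δ n) x
          ≤ Gop δ (fun y => Real.exp δ * Cop (Real.exp (-δ)) (uLower v δ n) y) x :=
        Gop_mono hδ hb hEcut key x
      have h4 : Gop δ (fun y => Real.exp δ * Cop (Real.exp (-δ)) (uLower v δ n) y) x
          = Real.exp δ * Gop δ (Cop (Real.exp (-δ)) (uLower v δ n)) x :=
        Gop_const_mul _ _
      calc min (Real.exp δ * Gop δ (uUpper v δ n) x) 1
          ≤ Real.exp δ * Gop δ (uUpper v δ n) x := min_le_left _ _
        _ ≤ Real.exp δ * (Real.exp δ * Gop δ (Cop (Real.exp (-δ)) (uLower v δ n)) x) := by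
            rw [← h4]
            exact mul_le_mul_of_nonneg_left h3 (Real.exp_nonneg δ)

lemma upper_mono (hδ : 0 < δ) {w1 w2 : ℝ → ℝ} (hw1 : Nice 1 w1) (hw2 : Nice 1 w2)
    (h : ∀ x, w1 x ≤ w2 x) : ∀ n x, uUpper w1 δ n x ≤ uUpper w2 δ n x := by
  intro n
  induction n with
  | zero => exact h
  | succ n ih =>
    intro x
    exact min_le_min (mul_le_mul_of_nonneg_left
      (Gop_mono hδ (uUpper_nice hδ hw1 n) (uUpper_nice hδ hw2 n) ih x)
      (Real.exp_nonneg δ)) le_rfl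

lemma upper_lip (hδ : 0 < δ) {w1 w2 : ℝ → ℝ} (hw1 : Nice 1 w1) (hw2 : Nice 1 w2)
    {ε : ℝ} (hε : 0 ≤ ε) (h : ∀ x, w2 x ≤ w1 x + ε) :
    ∀ n x, uUpper w2 δ n x ≤ uUpper w1 δ n x + Real.exp δ ^ n * ε := by
  intro n
  induction n with
  | zero => intro x; simpa [uUpper] using h x
  | succ n ih =>
    intro x
    have h1 := uUpper_nice hδ hw1 n
    have h2 := uUpper_nice hδ hw2 n
    have hsum : Nice (1 + Real.exp δ ^ n * ε) (fun y => uUpper w1 δ n y + Real.exp δ ^ n * ε) := by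
      constructor
      · intro a b hab
        exact add_le_add_left (h1.1 hab) _
      · intro y
        have h' := h1.2 y
        have hp : 0 ≤ Real.exp δ ^ n * ε := by positivity
        constructor
        · show 0 ≤ uUpper w1 δ n y + Real.exp δ ^ n * ε
          linarith [h'.1]
        · show uUpper w1 δ n y + Real.exp δ ^ n * ε ≤ 1 + Real.exp δ ^ n * ε
          linarith [h'.2]
    have step1 : Gop δ (uUpper w2 δ n) x
        ≤ Gop δ (uUpper w1 δ n) x + Real.exp δ ^ n * ε := by
      have := Gop_mono hδ (h2.mono (le_add_of_nonneg_right (by positivity))) hsum ih x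
      rwa [Gop_add_const hδ h1 _ x] at this
    have step2 : uUpper w2 δ (n+1) x
        ≤ min (Real.exp δ * Gop δ (uUpper w1 δ n) x + Real.exp δ ^ (n+1) * ε) 1 := by
      show min (Real.exp δ * Gop δ (uUpper w2 δ n) x) 1 ≤ _
      refine min_le_min ?_ le_rfl
      calc Real.exp δ * Gop δ (uUpper w2 δ n) x
          ≤ Real.exp δ * (Gop δ (uUpper w1 δ n) x + Real.exp δ ^ n * ε) :=
            mul_le_mul_of_nonneg_left step1 (Real.exp_nonneg δ)
        _ = Real.exp δ * Gop δ (uUpper w1 δ n) x + Real.exp δ ^ (n+1) * ε := by ring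
    refine le_trans step2 ?_
    have hd : 0 ≤ Real.exp δ ^ (n+1) * ε := by positivity
    show _ ≤ min (Real.exp δ * Gop δ (uUpper w1 δ n) x) 1 + Real.exp δ ^ (n+1) * ε
    calc min (Real.exp δ * Gop δ (uUpper w1 δ n) x + Real.exp δ ^ (n+1) * ε) 1
        ≤ min (Real.exp δ * Gop δ (uUpper w1 δ n) x + Real.exp δ ^ (n+1) * ε)
            (1 + Real.exp δ ^ (n+1) * ε) := min_le_min le_rfl (by linarith)
      _ = min (Real.exp δ * Gop δ (uUpper w1 δ n) x) 1 + Real.exp δ ^ (n+1) * ε :=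
          min_add_add_right _ _ _

lemma upper_shift {w : ℝ → ℝ} (s : ℝ) :
    ∀ n x, uUpper (fun y => w (y - s)) δ n x = uUpper w δ n (x - s) := by
  intro n
  induction n with
  | zero => intro x; rfl
  | succ n ih =>
    intro x
    show min (Real.exp δ * Gop δ (uUpper (fun y => w (y - s)) δ n) x) 1
      = min (Real.exp δ * Gop δ (uUpper w δ n) (x - s)) 1
    rw [show uUpper (fun y => w (y - s)) δ n = fun y => uUpper w δ n (y - s) from funext ih,
      Gop_shift]

end Iterates

end S17

open S17

theorem statement_17 (v : ℝ → ℝ)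
    (hv01 : ∀ x, v x ∈ Set.Icc (0 : ℝ) 1)
    (hvmono : Antitone v)
    (hvtop : Tendsto v atTop (𝓝 0))
    (hvbot : Tendsto v atBot (𝓝 1))
    (δ : ℝ) (hδ : 0 < δ)
    (vplus : ℝ → ℝ)
    -- case μ₀ ∈ ℝ :
    (hvplus_fin : BddBelow {x : ℝ | v x < 1} →
      ∀ x, vplus x = if x < sInf {x : ℝ | v x < 1} + δ then 1 else v x)
    -- case μ₀ = -∞ :
    (hvplus_inf : ¬ BddBelow {x : ℝ | v x < 1} →
      ∀ x, vplus x = if 1 - δ < v x then 1 else v x)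
    (n : ℕ) (A : ℝ) (hA : 1 / 2 ≤ A) :
    ∫ x in Set.Icc (-A) A, |uUpper vplus δ n x - uLower v δ n x|
      ≤ 4 * A * (1 + Real.exp (δ * n)) * (Real.exp δ - 1) := by
  have hA' : -A ≤ A := by linarith
  have hv : Nice 1 v := ⟨hvmono, fun x => ⟨(hv01 x).1, (hv01 x).2⟩⟩
  have hE1 : 1 ≤ Real.exp δ := Real.one_le_exp hδ.le
  have hδE : δ ≤ Real.exp δ - 1 := by linarith [Real.add_one_le_exp δ]
  have hEn : Real.exp (δ * n) = Real.exp δ ^ n := by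
    rw [mul_comm]; exact Real.exp_nat_mul δ n
  have hEn1 : 1 ≤ Real.exp (δ * n) :=
    Real.one_le_exp (mul_nonneg hδ.le (Nat.cast_nonneg n))
  -- vplus basic facts
  have hvp : Nice 1 vplus ∧ ∀ x, v x ≤ vplus x := by
    by_cases hB : BddBelow {x : ℝ | v x < 1}
    · have hf := hvplus_fin hB
      refine ⟨⟨?_, ?_⟩, ?_⟩
      · intro x y hxy
        rw [hf x, hf y]
        split_ifs with h1 h2 h2
        · exact le_rfl
        · linarith
        · exact (hv01 y).2
        · exact hvmono hxy
      · intro x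
        rw [hf x]
        split_ifs with h1
        · exact ⟨zero_le_one, le_rfl⟩
        · exact ⟨(hv01 x).1, (hv01 x).2⟩
      · intro x
        rw [hf x]
        split_ifs with h1
        · exact (hv01 x).2
        · exact le_rfl
    · have hf := hvplus_inf hB
      refine ⟨⟨?_, ?_⟩, ?_⟩
      · intro x y hxy
        rw [hf x, hf y]
        split_ifs with h1 h2 h2
        · exact le_rfl
        · exact absurd (lt_of_lt_of_le h1 (hvmono hxy)) h2
        · exact (hv01 y).2
        · exact hvmono hxy
      · intro x
        rw [hf x]
        split_ifs with h1
        · exact ⟨zero_le_one, le_rfl⟩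
        · exact ⟨(hv01 x).1, (hv01 x).2⟩
      · intro x
        rw [hf x]
        split_ifs with h1
        · exact (hv01 x).2
        · exact le_rfl
  obtain ⟨hvpn, hvvp⟩ := hvp
  have ha := uLower_nice hδ hv n
  have hb := uUpper_nice hδ hv n
  have hc := uUpper_nice hδ hvpn n
  have hab : ∀ x, uLower v δ n x ≤ uUpper v δ n x := fun x => (sandwich hδ hv n x).1
  have hbE : ∀ x, uUpper v δ n x ≤ Real.exp δ * uLower v δ n x :=
    fun x => le_trans (sandwich hδ hv n x).2 (min_le_right _ _)
  have hbc : ∀ x, uUpper v δ n x ≤ uUpper vplus δ n x := upper_mono hδ hv hvpn hvvp n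
  -- convert to interval integral
  rw [MeasureTheory.integral_Icc_eq_integral_Ioc, ← intervalIntegral.integral_of_le hA']
  have habs : Set.EqOn (fun x => |uUpper vplus δ n x - uLower v δ n x|)
      (fun x => uUpper vplus δ n x - uLower v δ n x) (Set.uIcc (-A) A) := by
    intro x _
    exact abs_of_nonneg (by linarith [hab x, hbc x])
  rw [intervalIntegral.integral_congr habs]
  -- interval integrability (all antitone bounded)
  have iival : ∀ (f : ℝ → ℝ), Antitone f → ∀ p q : ℝ, IntervalIntegrable f volume p q :=
    fun f hf p q => hf.intervalIntegrable
  have iia := iival _ ha.1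
  have iib := iival _ hb.1
  have iic := iival _ hc.1
  have hsplit : (∫ x in (-A)..A, (uUpper vplus δ n x - uLower v δ n x))
      = (∫ x in (-A)..A, uUpper vplus δ n x) - ∫ x in (-A)..A, uLower v δ n x :=
    intervalIntegral.integral_sub (iic _ _) (iia _ _)
  rw [hsplit]
  -- bound for the middle part : Ib - Ia ≤ 2A(e^δ - 1)
  have bound2 : (∫ x in (-A)..A, uUpper v δ n x) - (∫ x in (-A)..A, uLower v δ n x)
      ≤ 2 * A * (Real.exp δ - 1) := by
    have h1 : (∫ x in (-A)..A, uUpper v δ n x) - (∫ x in (-A)..A, uLower v δ n x)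
        = ∫ x in (-A)..A, (uUpper v δ n x - uLower v δ n x) :=
      (intervalIntegral.integral_sub (iib _ _) (iia _ _)).symm
    rw [h1]
    have h2 : (∫ x in (-A)..A, (uUpper v δ n x - uLower v δ n x))
        ≤ ∫ _x in (-A)..A, (Real.exp δ - 1) := by
      apply intervalIntegral.integral_mono_on hA' ((iib _ _).sub (iia _ _))
        intervalIntegrable_const
      intro x _
      nlinarith [hbE x, (ha.2 x).2, (ha.2 x).1]
    rw [intervalIntegral.integral_const] at h2
    calc (∫ x in (-A)..A, (uUpper v δ n x - uLower v δ n x))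
        ≤ (A - -A) • (Real.exp δ - 1) := h2
      _ = 2 * A * (Real.exp δ - 1) := by rw [smul_eq_mul]; ring
  by_cases hB : BddBelow {x : ℝ | v x < 1}
  · -- finite case
    have hfin := hvplus_fin hB
    have hone : ∀ y, y < sInf {x : ℝ | v x < 1} + δ → v (y - δ) = 1 := by
      intro y hy
      have hy' : y - δ < sInf {x : ℝ | v x < 1} := by linarith
      have hnot : ¬ (v (y - δ) < 1) := fun hlt =>
        absurd hy' (not_lt.mpr (csInf_le hB hlt))
      exact le_antisymm (hv01 _).2 (not_lt.mp hnot)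
    have hshift : ∀ x, vplus x ≤ v (x - δ) := by
      intro x
      rw [hfin x]
      split_ifs with h1
      · exact (hone x h1).ge
      · exact hvmono (by linarith)
    have hvshift : Nice 1 (fun y => v (y - δ)) :=
      ⟨fun x y hxy => hvmono (by simpa using hxy), fun x => ⟨(hv01 _).1, (hv01 _).2⟩⟩
    have hcb : ∀ x, uUpper vplus δ n x ≤ uUpper v δ n (x - δ) := by
      intro x
      have h1 := upper_mono hδ hvpn hvshift hshift n x
      exact h1.trans_eq (upper_shift δ n x)
    have step1 : (∫ x in (-A)..A, uUpper vplus δ n x)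
        ≤ ∫ x in (-A)..A, uUpper v δ n (x - δ) := by
      apply intervalIntegral.integral_mono_on hA' (iic _ _)
        (iival _ (fun x y hxy => hb.1 (by linarith : x - δ ≤ y - δ)) _ _)
      exact fun x _ => hcb x
    rw [intervalIntegral.integral_comp_sub_right (uUpper v δ n) δ] at step1
    have h5 : (∫ x in (-A - δ)..(-A), uUpper v δ n x)
        + (∫ x in (-A)..(A - δ), uUpper v δ n x)
        = ∫ x in (-A - δ)..(A - δ), uUpper v δ n x :=
      intervalIntegral.integral_add_adjacent_intervals (iib _ _) (iib _ _)
    have h6 : (∫ x in (-A)..(A - δ), uUpper v δ n x)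
        + (∫ x in (A - δ)..A, uUpper v δ n x)
        = ∫ x in (-A)..A, uUpper v δ n x :=
      intervalIntegral.integral_add_adjacent_intervals (iib _ _) (iib _ _)
    have h7 : (∫ x in (-A - δ)..(-A), uUpper v δ n x) ≤ δ := by
      have := intervalIntegral.integral_mono_on (by linarith : -A - δ ≤ -A) (iib _ _)
        intervalIntegrable_const (fun x _ => (hb.2 x).2)
      rw [intervalIntegral.integral_const] at this
      calc (∫ x in (-A - δ)..(-A), uUpper v δ n x) ≤ (-A - (-A - δ)) • (1:ℝ) := this
        _ = δ := by rw [smul_eq_mul]; ring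
    have h8 : 0 ≤ ∫ x in (A - δ)..A, uUpper v δ n x :=
      intervalIntegral.integral_nonneg (by linarith) (fun x _ => (hb.2 x).1)
    -- combine
    have key : (∫ x in (-A)..A, uUpper vplus δ n x)
        ≤ (∫ x in (-A)..A, uUpper v δ n x) + δ := by linarith
    have final : (∫ x in (-A)..A, uUpper vplus δ n x) - (∫ x in (-A)..A, uLower v δ n x)
        ≤ δ + 2 * A * (Real.exp δ - 1) := by linarith
    refine final.trans ?_
    nlinarith [mul_nonneg (sub_nonneg.mpr hE1)
      (show (0:ℝ) ≤ 4 * A * (1 + Real.exp (δ * n)) - 2 * A - 1 by nlinarith)]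
  · -- infinite case
    have hinf := hvplus_inf hB
    have hlip : ∀ x, vplus x ≤ v x + δ := by
      intro x
      rw [hinf x]
      split_ifs with h1
      · linarith
      · linarith
    have hcb : ∀ x, uUpper vplus δ n x ≤ uUpper v δ n x + Real.exp δ ^ n * δ :=
      upper_lip hδ hv hvpn hδ.le hlip n
    have step1 : (∫ x in (-A)..A, uUpper vplus δ n x)
        ≤ (∫ x in (-A)..A, uUpper v δ n x) + 2 * A * (Real.exp δ ^ n * δ) := by
      have h1 : (∫ x in (-A)..A, uUpper vplus δ n x)
          ≤ ∫ x in (-A)..A, (uUpper v δ n x + Real.exp δ ^ n * δ) := by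
        apply intervalIntegral.integral_mono_on hA' (iic _ _)
          ((iib _ _).add intervalIntegrable_const)
        exact fun x _ => hcb x
      have h2 : (∫ x in (-A)..A, (uUpper v δ n x + Real.exp δ ^ n * δ))
          = (∫ x in (-A)..A, uUpper v δ n x) + (A - -A) • (Real.exp δ ^ n * δ) := by
        rw [intervalIntegral.integral_add (iib _ _) intervalIntegrable_const,
          intervalIntegral.integral_const]
      rw [h2] at h1
      calc (∫ x in (-A)..A, uUpper vplus δ n x)
          ≤ (∫ x in (-A)..A, uUpper v δ n x) + (A - -A) • (Real.exp δ ^ n * δ) := h1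
        _ = (∫ x in (-A)..A, uUpper v δ n x) + 2 * A * (Real.exp δ ^ n * δ) := by
            rw [smul_eq_mul]; ring
    have final : (∫ x in (-A)..A, uUpper vplus δ n x) - (∫ x in (-A)..A, uLower v δ n x)
        ≤ 2 * A * (Real.exp δ - 1) + 2 * A * (Real.exp δ ^ n * δ) := by linarith
    refine final.trans ?_
    rw [hEn]
    have hpn : (0:ℝ) ≤ Real.exp δ ^ n := pow_nonneg (Real.exp_nonneg δ) n
    have h9 : 2 * A * (Real.exp δ ^ n * δ) ≤ 2 * A * (Real.exp δ ^ n * (Real.exp δ - 1)) := by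
      apply mul_le_mul_of_nonneg_left _ (by linarith : (0:ℝ) ≤ 2 * A)
      exact mul_le_mul_of_nonneg_left hδE hpn
    nlinarith [mul_nonneg hpn (sub_nonneg.mpr hE1), mul_nonneg (mul_nonneg (by linarith : (0:ℝ) ≤ 2*A) hpn) (sub_nonneg.mpr hE1)]
end

section
/- Suppose v⁺ : ℝ → [0,1] is non-increasing, v⁺(x) → 0 as x → ∞, and v⁺(x) = 1 for some x ∈ ℝ. For t ≥ 0 let u⁺(·,t) := e^t G_t v⁺ (with u⁺(·,0) = v⁺), and let μ⁺_t := inf{x ∈ ℝ : u⁺(x,t) < 1}. Then μ⁺_t ∈ ℝ for every t ≥ 0, and the map t ↦ μ⁺_t is continuous on [0,∞). -/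
open MeasureTheory Filter Set
open scoped Topology

/-- `u⁺(x,t) = e^t (G_t v⁺)(x)` for `t > 0`, with `u⁺(·,0) = v⁺`. -/
noncomputable def uPlusHeat (vplus : ℝ → ℝ) (x t : ℝ) : ℝ :=
  if t = 0 then vplus x else Real.exp t * ∫ y, heatKernel t (x - y) * vplus y

open Real

set_option linter.unusedSectionVars false

namespace S18

noncomputable def stdG (z : ℝ) : ℝ := Real.exp (-(z ^ 2) / 2) / Real.sqrt (2 * Real.pi)

lemma stdG_fun_eq : stdG = fun z => (Real.sqrt (2 * Real.pi))⁻¹ * Real.exp (-(1/2) * z ^ 2) := by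
  funext z; rw [stdG]; ring_nf

lemma stdG_pos (z : ℝ) : 0 < stdG z := by
  apply div_pos (Real.exp_pos _)
  exact Real.sqrt_pos.2 (by positivity)

lemma stdG_nonneg (z : ℝ) : 0 ≤ stdG z := (stdG_pos z).le

lemma integrable_stdG : Integrable stdG := by
  rw [stdG_fun_eq]
  exact (integrable_exp_neg_mul_sq (by norm_num : (0:ℝ) < 1/2)).const_mul _

lemma integral_stdG : ∫ z, stdG z = 1 := by
  rw [stdG_fun_eq]
  rw [integral_const_mul, integral_gaussian, show Real.pi / (1/2) = 2 * Real.pi by ring]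
  exact inv_mul_cancel₀ (Real.sqrt_ne_zero'.2 (by positivity))

noncomputable def Psi (a : ℝ) : ℝ := ∫ z in Ioi a, stdG z

lemma Psi_nonneg (a : ℝ) : 0 ≤ Psi a :=
  setIntegral_nonneg measurableSet_Ioi fun z _ => stdG_nonneg z

lemma Iic_add_Psi (a : ℝ) : (∫ z in Iic a, stdG z) + Psi a = 1 := by
  rw [Psi, intervalIntegral.integral_Iic_add_Ioi integrable_stdG.integrableOn
    integrable_stdG.integrableOn, integral_stdG]

lemma Psi_le_one (a : ℝ) : Psi a ≤ 1 := by
  have h := Iic_add_Psi a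
  have h2 : (0:ℝ) ≤ ∫ z in Iic a, stdG z :=
    setIntegral_nonneg measurableSet_Iic fun z _ => stdG_nonneg z
  linarith

lemma Iic_neg_eq_Psi (a : ℝ) : (∫ z in Iic (-a), stdG z) = Psi a := by
  rw [Psi, ← integral_comp_neg_Ioi]
  congr 1; ext z; rw [stdG, stdG]; ring_nf

lemma integrable_exp_neg_const_mul {a : ℝ} (ha : 0 < a) :
    IntegrableOn (fun z : ℝ => Real.exp (-(a * z))) (Ioi 0) := by
  have := exp_neg_integrableOn_Ioi (a := 0) (b := a) ha
  simpa [mul_comm] using this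

lemma integral_exp_neg_mul_Ioi {a c : ℝ} (ha : 0 < a) :
    ∫ z in Ioi c, Real.exp (-(a * z)) = Real.exp (-(a * c)) / a := by
  rw [show (fun z : ℝ => Real.exp (-(a*z))) = fun z => Real.exp (-(a*z)) from rfl]
  have h := integral_comp_mul_left_Ioi (fun z => Real.exp (-z)) c ha
  simp only [smul_eq_mul] at h
  rw [show (fun z : ℝ => Real.exp (-(a*z))) = (fun z => Real.exp (-z)) ∘ (fun z => a * z) from rfl] at *
  calc ∫ z in Ioi c, Real.exp (-(a*z)) = a⁻¹ * ∫ z in Ioi (a*c), Real.exp (-z) := h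
    _ = Real.exp (-(a*c)) / a := by rw [integral_exp_neg_Ioi]; ring

lemma Psi_le (a : ℝ) (ha : 0 < a) : Psi a ≤ Real.exp (-(a^2)/2) / a := by
  have h1 : Psi a ≤ ∫ z in Ioi a, Real.exp (a^2/2) * Real.exp (-(a*z)) := by
    apply setIntegral_mono_on integrable_stdG.integrableOn
    · exact ((exp_neg_integrableOn_Ioi a ha).congr_fun
        (fun z _ => by rw [neg_mul]) measurableSet_Ioi).const_mul _
    · exact measurableSet_Ioi
    · intro z _
      rw [stdG, ← Real.exp_add]
      have h2 : (1:ℝ) ≤ Real.sqrt (2*Real.pi) := by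
        rw [show (1:ℝ) = Real.sqrt 1 by simp]
        apply Real.sqrt_le_sqrt; nlinarith [Real.pi_gt_three]
      calc Real.exp (-(z^2)/2) / Real.sqrt (2*Real.pi) ≤ Real.exp (-(z^2)/2) / 1 :=
            div_le_div_of_nonneg_left (Real.exp_pos _).le one_pos h2
        _ = Real.exp (-(z^2)/2) := div_one _
        _ ≤ Real.exp (a^2/2 + -(a*z)) := by
            apply Real.exp_le_exp.2; nlinarith [sq_nonneg (z - a)]
  calc Psi a ≤ ∫ z in Ioi a, Real.exp (a^2/2) * Real.exp (-(a*z)) := h1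
    _ = Real.exp (a^2/2) * (Real.exp (-(a*a)) / a) := by
        rw [integral_const_mul, integral_exp_neg_mul_Ioi ha]
    _ = Real.exp (-(a^2)/2) / a := by
        rw [div_eq_mul_inv, div_eq_mul_inv, ← mul_assoc, ← Real.exp_add]; ring_nf

lemma Psi_tendsto : Tendsto Psi atTop (𝓝 0) := by
  apply squeeze_zero' (Eventually.of_forall fun a => Psi_nonneg a)
  · filter_upwards [eventually_ge_atTop (1:ℝ)] with a ha
    calc Psi a ≤ Real.exp (-(a^2)/2) / a := Psi_le a (by linarith)
      _ ≤ Real.exp (-(a/2)) / 1 := by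
          apply div_le_div₀ (Real.exp_pos _).le _ one_pos ha
          apply Real.exp_le_exp.2; nlinarith
      _ = Real.exp (-(a/2)) := div_one _
  · have : Tendsto (fun a : ℝ => -(a/2)) atTop atBot := by
      apply tendsto_neg_atBot_iff.2
      exact Tendsto.atTop_div_const two_pos tendsto_id
    exact Real.tendsto_exp_atBot.comp this

section G

variable {v : ℝ → ℝ} (hm : Measurable v) (hb : ∀ y, v y ∈ Icc (0:ℝ) 1)

noncomputable def G (v : ℝ → ℝ) (x s : ℝ) : ℝ := ∫ z, stdG z * v (x - s * z)

lemma continuous_stdG : Continuous stdG := by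
  apply Continuous.div_const
  exact Real.continuous_exp.comp (by continuity)

include hm hb in
lemma integrable_integrand (x s : ℝ) : Integrable (fun z => stdG z * v (x - s * z)) := by
  apply Integrable.mono' integrable_stdG
  · exact (continuous_stdG.measurable.mul
      (hm.comp ((measurable_const.sub (measurable_const.mul measurable_id))))).aestronglyMeasurable
  · refine Eventually.of_forall fun z => ?_
    rw [Real.norm_eq_abs, abs_mul, abs_of_nonneg (stdG_nonneg z)]
    have h := hb (x - s * z)
    calc stdG z * |v (x - s*z)| ≤ stdG z * 1 := by
          apply mul_le_mul_of_nonneg_left _ (stdG_nonneg z)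
          rw [abs_le]; constructor <;> linarith [h.1, h.2]
      _ = stdG z := mul_one _

lemma sqrt_two_t_heat {t : ℝ} (ht : 0 < t) (w : ℝ) :
    Real.sqrt (2*t) * heatKernel t (Real.sqrt (2*t) * w) = stdG w := by
  rw [heatKernel, stdG]
  have h1 : (Real.sqrt (2*t) * w) ^ 2 = 2 * t * w ^ 2 := by
    rw [mul_pow, Real.sq_sqrt (by linarith)]
  rw [h1]
  have h2 : -(2 * t * w ^ 2) / (4 * t) = -(w ^ 2) / 2 := by
    field_simp; ring
  rw [h2]
  have h3 : Real.sqrt (4 * Real.pi * t) = Real.sqrt (2 * Real.pi) * Real.sqrt (2 * t) := by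
    rw [← Real.sqrt_mul (by positivity)]
    congr 1; ring
  rw [h3]
  have h4 : Real.sqrt (2*t) ≠ 0 := by positivity
  field_simp

include hm hb in
lemma uPlus_rep {t : ℝ} (ht : 0 < t) (x : ℝ) :
    uPlusHeat v x t = Real.exp t * G v x (Real.sqrt (2*t)) := by
  rw [uPlusHeat, if_neg ht.ne']
  congr 1
  set s := Real.sqrt (2*t) with hs
  have hspos : 0 < s := Real.sqrt_pos.2 (by linarith)
  set F : ℝ → ℝ := fun z => heatKernel t z * v (x - z) with hF
  have step1 : ∫ y, heatKernel t (x - y) * v y = ∫ z, F z := by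
    rw [← integral_sub_left_eq_self F volume x]
    congr 1; funext y; rw [hF]; simp [sub_sub_cancel]
  have step2 : ∫ w, F (s * w) = |s⁻¹| • ∫ z, F z := Measure.integral_comp_mul_left F s
  have step3 : G v x s = s * ∫ w, F (s * w) := by
    rw [G, ← integral_const_mul]
    congr 1; funext w
    rw [hF]
    have := sqrt_two_t_heat ht w
    rw [← hs] at this
    rw [← this]; ring
  rw [step1, step3, step2, smul_eq_mul, abs_of_pos (inv_pos.2 hspos)]
  field_simp

include hm hb in
lemma G_nonneg (x s : ℝ) : 0 ≤ G v x s := by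
  apply integral_nonneg
  intro z
  exact mul_nonneg (stdG_nonneg z) (hb _).1

include hm hb in
lemma G_le_one (x s : ℝ) : G v x s ≤ 1 := by
  rw [← integral_stdG]
  apply integral_mono (integrable_integrand hm hb x s) integrable_stdG
  intro z
  calc stdG z * v (x - s*z) ≤ stdG z * 1 :=
        mul_le_mul_of_nonneg_left (hb _).2 (stdG_nonneg z)
    _ = stdG z := mul_one _

include hm hb in
lemma G_anti (hvmono : Antitone v) (s : ℝ) : Antitone (fun x => G v x s) := by
  intro x₁ x₂ h
  apply integral_mono (integrable_integrand hm hb x₂ s) (integrable_integrand hm hb x₁ s)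
  intro z
  exact mul_le_mul_of_nonneg_left (hvmono (by linarith [sub_le_sub_right h (s*z)])) (stdG_nonneg z)

include hm hb in
lemma G_lower {b : ℝ} (h1 : ∀ y, y < b → v y = 1) (x : ℝ) {s : ℝ} (hs : 0 < s) :
    1 - Psi ((b - x)/s) ≤ G v x s := by
  set a := (b - x)/s with ha
  have key : ∀ z, (Ioi (-a)).indicator stdG z ≤ stdG z * v (x - s * z) := by
    intro z
    by_cases hz : z ∈ Ioi (-a)
    · rw [indicator_of_mem hz]
      have : x - s * z < b := by
        have : -a < z := hz
        have h2 : s * (-a) < s * z := by exact (mul_lt_mul_iff_right₀ hs).2 this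
        rw [ha] at h2
        have : s * ((x - b)/s) < s * z := by rw [show (x-b)/s = -((b-x)/s) by ring]; exact h2
        rw [mul_div_cancel₀ _ hs.ne'] at this
        linarith
      rw [h1 _ this, mul_one]
    · rw [indicator_of_notMem hz]
      exact mul_nonneg (stdG_nonneg z) (hb _).1
  have hint : Integrable ((Ioi (-a)).indicator stdG) :=
    integrable_stdG.indicator measurableSet_Ioi
  have := integral_mono hint (integrable_integrand hm hb x s) key
  rw [integral_indicator measurableSet_Ioi] at this
  have heq : ∫ z in Ioi (-a), stdG z = 1 - Psi a := by
    have h2 := Iic_add_Psi (-a)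
    have h3 := Iic_neg_eq_Psi a
    have h4 : Psi (-a) = ∫ z in Ioi (-a), stdG z := rfl
    linarith
  rw [heq] at this
  exact this

include hm hb in
lemma G_upper (x x' : ℝ) {s : ℝ} (hs : 0 < s) (hvmono : Antitone v) :
    G v x s ≤ v x' + Psi ((x - x')/s) := by
  set a := (x - x')/s with ha
  have key : ∀ z, stdG z * v (x - s * z) ≤ v x' * stdG z + (Ioi a).indicator stdG z := by
    intro z
    by_cases hz : z ∈ Ioi a
    · rw [indicator_of_mem hz]
      have h2 : stdG z * v (x - s*z) ≤ stdG z := by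
        calc stdG z * v (x - s*z) ≤ stdG z * 1 :=
              mul_le_mul_of_nonneg_left (hb _).2 (stdG_nonneg z)
          _ = stdG z := mul_one _
      nlinarith [mul_nonneg (hb x').1 (stdG_nonneg z)]
    · rw [indicator_of_notMem hz]
      have hza : z ≤ a := not_lt.1 hz
      have : x' ≤ x - s * z := by
        have h2 : s * z ≤ s * a := (mul_le_mul_iff_right₀ hs).2 hza
        rw [ha, mul_div_cancel₀ _ hs.ne'] at h2
        linarith
      have h3 : v (x - s*z) ≤ v x' := hvmono this
      nlinarith [stdG_nonneg z]
  have hint : Integrable (fun z => v x' * stdG z + (Ioi a).indicator stdG z) :=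
    (integrable_stdG.const_mul _).add (integrable_stdG.indicator measurableSet_Ioi)
  have := integral_mono (integrable_integrand hm hb x s) hint key
  rw [integral_add (integrable_stdG.const_mul _) (integrable_stdG.indicator measurableSet_Ioi),
    integral_const_mul, integral_stdG, integral_indicator measurableSet_Ioi, mul_one] at this
  exact this

include hm hb in
lemma G_strict (hvmono : Antitone v) {b : ℝ} (h1 : ∀ y, y < b → v y = 1)
    (h2 : ∀ y, b < y → v y < 1) {s : ℝ} (hs : 0 < s) {x₁ x₂ : ℝ} (hx : x₁ < x₂) :
    G v x₂ s < G v x₁ s := by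
  set δ := (x₂ - x₁)/2 with hδ
  have hδpos : 0 < δ := by rw [hδ]; linarith
  set c := v (b + δ) with hc
  have hclt : c < 1 := h2 _ (by linarith)
  set I : Set ℝ := Ioo ((x₁ - b)/s) ((x₂ - b - δ)/s) with hI
  have hIlt : (x₁ - b)/s < (x₂ - b - δ)/s := by
    rw [div_lt_div_iff_of_pos_right hs]; linarith
  have hvolI : (0:ℝ) < (x₂ - b - δ)/s - (x₁ - b)/s := by linarith
  have key : ∀ z ∈ I, v (x₁ - s * z) - v (x₂ - s * z) ≥ 1 - c := by
    intro z hz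
    obtain ⟨hz1, hz2⟩ := hz
    have ha1 : x₁ - b < s * z := by
      have := (div_lt_iff₀ hs).1 hz1; linarith [this]
    have ha2 : s * z < x₂ - b - δ := by
      have := (lt_div_iff₀ hs).1 hz2; linarith [this]
    have hv1 : v (x₁ - s * z) = 1 := h1 _ (by linarith)
    have hv2 : v (x₂ - s * z) ≤ c := hvmono (by linarith)
    linarith
  have hsub : Integrable (fun z => stdG z * v (x₁ - s*z) - stdG z * v (x₂ - s*z)) :=
    (integrable_integrand hm hb x₁ s).sub (integrable_integrand hm hb x₂ s)
  have hnonneg : ∀ z, 0 ≤ stdG z * v (x₁ - s*z) - stdG z * v (x₂ - s*z) := by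
    intro z
    have : v (x₂ - s*z) ≤ v (x₁ - s*z) := hvmono (by nlinarith)
    nlinarith [stdG_nonneg z]
  have step1 : ∫ z in I, (stdG z * v (x₁ - s*z) - stdG z * v (x₂ - s*z)) ≤
      ∫ z, (stdG z * v (x₁ - s*z) - stdG z * v (x₂ - s*z)) :=
    setIntegral_le_integral hsub (Eventually.of_forall hnonneg)
  have step2 : (1 - c) * ∫ z in I, stdG z ≤
      ∫ z in I, (stdG z * v (x₁ - s*z) - stdG z * v (x₂ - s*z)) := by
    rw [← integral_const_mul]
    apply setIntegral_mono_on ((integrable_stdG.const_mul _).integrableOn) hsub.integrableOn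
      measurableSet_Ioo
    intro z hz
    have := key z hz
    nlinarith [stdG_nonneg z]
  have step3 : 0 < ∫ z in I, stdG z := by
    rw [setIntegral_pos_iff_support_of_nonneg_ae
      (Eventually.of_forall fun z => stdG_nonneg z) integrable_stdG.integrableOn]
    have : Function.support stdG = univ := by
      ext z; simp [Function.mem_support, (stdG_pos z).ne']
    rw [this, univ_inter, hI, Real.volume_Ioo]
    exact ENNReal.ofReal_pos.2 hvolI
  have final : 0 < G v x₁ s - G v x₂ s := by
    rw [G, G, ← integral_sub (integrable_integrand hm hb x₁ s) (integrable_integrand hm hb x₂ s)]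
    calc (0:ℝ) < (1 - c) * ∫ z in I, stdG z := mul_pos (by linarith) step3
      _ ≤ _ := le_trans step2 step1
  linarith

include hm hb in
lemma G_contAt (hvmono : Antitone v) (x : ℝ) {s₀ : ℝ} (hs₀ : s₀ ≠ 0) :
    ContinuousAt (fun s => G v x s) s₀ := by
  rw [ContinuousAt]
  apply tendsto_integral_filter_of_dominated_convergence stdG
  · exact Eventually.of_forall fun s =>
      (integrable_integrand hm hb x s).aestronglyMeasurable
  · refine Eventually.of_forall fun s => Eventually.of_forall fun z => ?_
    rw [Real.norm_eq_abs, abs_mul, abs_of_nonneg (stdG_nonneg z)]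
    have h := hb (x - s * z)
    calc stdG z * |v (x - s*z)| ≤ stdG z * 1 := by
          apply mul_le_mul_of_nonneg_left _ (stdG_nonneg z)
          rw [abs_le]; constructor <;> linarith [h.1, h.2]
      _ = stdG z := mul_one _
  · exact integrable_stdG
  · have hD : Set.Countable {y | ¬ ContinuousAt v y} := hvmono.countable_not_continuousAt
    have hinj : Function.Injective (fun z : ℝ => x - s₀ * z) := by
      intro a b hab
      simp only at hab
      have : s₀ * a = s₀ * b := by linarith
      exact mul_left_cancel₀ hs₀ this
    have hN : Set.Countable ((fun z : ℝ => x - s₀ * z) ⁻¹' {y | ¬ ContinuousAt v y}) :=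
      Set.Countable.preimage hD hinj
    filter_upwards [hN.measure_zero volume |> measure_eq_zero_iff_ae_notMem.1] with z hz
    have hcont : ContinuousAt v (x - s₀ * z) := by
      by_contra hcon
      exact hz hcon
    apply Tendsto.const_mul
    have h1 : Tendsto (fun s : ℝ => x - s * z) (𝓝 s₀) (𝓝 (x - s₀ * z)) :=
      (continuousAt_const.sub (continuousAt_id.mul continuousAt_const))
    exact Tendsto.comp hcont h1

end G

lemma tendsto_exp_div {c : ℝ} (hc : 0 < c) :
    Tendsto (fun t : ℝ => Real.exp (-(c/t)) / t) (𝓝[>] (0:ℝ)) (𝓝 0) := by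
  have h1 : Tendsto (fun u : ℝ => (c*u) * Real.exp (-(c*u))) atTop (𝓝 0) := by
    have := tendsto_pow_mul_exp_neg_atTop_nhds_zero 1
    simp only [pow_one] at this
    exact this.comp (Tendsto.const_mul_atTop hc tendsto_id)
  have h2 : Tendsto (fun u : ℝ => u * Real.exp (-(c*u))) atTop (𝓝 0) := by
    have := h1.const_mul c⁻¹
    rw [mul_zero] at this
    apply this.congr
    intro u; field_simp
  have h3 : Tendsto (fun t : ℝ => t⁻¹) (𝓝[>] (0:ℝ)) atTop := tendsto_inv_nhdsGT_zero
  have := h2.comp h3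
  apply this.congr
  intro t
  simp only [Function.comp_apply]
  rw [div_eq_mul_inv, div_eq_mul_inv, mul_comm]

lemma sqrt2t_tendsto : Tendsto (fun t : ℝ => Real.sqrt (2*t)) (𝓝[>] (0:ℝ)) (𝓝[>] (0:ℝ)) := by
  rw [tendsto_nhdsWithin_iff]
  constructor
  · have : Tendsto (fun t : ℝ => Real.sqrt (2*t)) (𝓝 0) (𝓝 (Real.sqrt (2*0))) :=
      (Real.continuous_sqrt.comp (continuous_const.mul continuous_id)).tendsto 0
    simpa using this.mono_left nhdsWithin_le_nhds
  · filter_upwards [self_mem_nhdsWithin] with t ht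
    exact Real.sqrt_pos.2 (by simpa using mul_pos two_pos (show (0:ℝ) < t from ht))

lemma a_tendsto {d : ℝ} (hd : 0 < d) :
    Tendsto (fun t : ℝ => d / Real.sqrt (2*t)) (𝓝[>] (0:ℝ)) atTop := by
  have h1 : Tendsto (fun s : ℝ => d / s) (𝓝[>] (0:ℝ)) atTop := by
    have := tendsto_inv_nhdsGT_zero.const_mul_atTop hd
    apply this.congr
    intro s; rw [div_eq_mul_inv]
  exact h1.comp sqrt2t_tendsto

end S18

theorem statement_18 (vplus : ℝ → ℝ)
    (hv01 : ∀ x, vplus x ∈ Set.Icc (0 : ℝ) 1)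
    (hvmono : Antitone vplus)
    (hvtop : Tendsto vplus atTop (𝓝 0))
    (hvone : ∃ x, vplus x = 1) :
    (∀ t, 0 ≤ t →
      {x : ℝ | uPlusHeat vplus x t < 1}.Nonempty ∧
      BddBelow {x : ℝ | uPlusHeat vplus x t < 1}) ∧
    ContinuousOn (fun t => sInf {x : ℝ | uPlusHeat vplus x t < 1}) (Set.Ici 0) := by
  classical
  obtain ⟨x₀, hx₀⟩ := hvone
  have hm : Measurable vplus := Antitone.measurable hvmono
  have hu0 : ∀ x, uPlusHeat vplus x 0 = vplus x := fun x => if_pos rfl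
  have hrep : ∀ (x : ℝ) {t : ℝ}, 0 < t →
      uPlusHeat vplus x t = Real.exp t * S18.G vplus x (Real.sqrt (2*t)) :=
    fun x {t} ht => S18.uPlus_rep hm hv01 ht x
  have hspos : ∀ {t : ℝ}, 0 < t → 0 < Real.sqrt (2*t) :=
    fun {t} ht => Real.sqrt_pos.2 (by linarith)
  have hone_left : ∀ y, y ≤ x₀ → vplus y = 1 :=
    fun y hy => le_antisymm (hv01 y).2 (by rw [← hx₀]; exact hvmono hy)
  have hanti : ∀ {t : ℝ}, 0 ≤ t → Antitone (fun x => uPlusHeat vplus x t) := by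
    intro t ht x₁ x₂ h
    rcases eq_or_lt_of_le ht with h0 | h0
    · simp only [← h0, hu0]
      exact hvmono h
    · simp only [hrep _ h0]
      exact mul_le_mul_of_nonneg_left (S18.G_anti hm hv01 hvmono _ h) (Real.exp_pos t).le
  have hset0 : {x : ℝ | uPlusHeat vplus x 0 < 1} = {x | vplus x < 1} := by
    ext x; simp [hu0]
  have hS0ne : {x : ℝ | vplus x < 1}.Nonempty := by
    have := hvtop.eventually_lt_const (by norm_num : (0:ℝ) < 1)
    exact this.exists
  have hS0bdd : BddBelow {x : ℝ | vplus x < 1} := by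
    refine ⟨x₀, fun x hx => ?_⟩
    by_contra h
    push_neg at h
    have := hone_left x h.le
    simp only [mem_setOf_eq] at hx
    linarith
  have hμleft : ∀ y, y < sInf {x : ℝ | vplus x < 1} → vplus y = 1 := by
    intro y hy
    have hnm : y ∉ {x : ℝ | vplus x < 1} := notMem_of_lt_csInf hy hS0bdd
    simp only [mem_setOf_eq, not_lt] at hnm
    exact le_antisymm (hv01 y).2 hnm
  have hμright : ∀ y, sInf {x : ℝ | vplus x < 1} < y → vplus y < 1 := by
    intro y hy
    obtain ⟨w, hw, hwy⟩ := exists_lt_of_csInf_lt hS0ne hy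
    exact lt_of_le_of_lt (hvmono hwy.le) hw
  -- Nonempty and BddBelow for all t ≥ 0
  have key : ∀ t, 0 ≤ t → ({x : ℝ | uPlusHeat vplus x t < 1}.Nonempty ∧
      BddBelow {x : ℝ | uPlusHeat vplus x t < 1}) := by
    intro t ht
    rcases eq_or_lt_of_le ht with h0 | h0
    · rw [← h0, hset0]
      refine ⟨hS0ne, hS0bdd⟩
    · constructor
      · -- nonempty
        have hexppos : (0:ℝ) < Real.exp (-t) / 2 := by positivity
        obtain ⟨x', hx'⟩ := (hvtop.eventually_lt_const hexppos).exists
        have htend : Tendsto (fun x : ℝ => (x - x') / Real.sqrt (2*t)) atTop atTop := by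
          apply Tendsto.atTop_div_const (hspos h0)
          exact (tendsto_atTop_add_const_right _ (-x') tendsto_id).congr
            (fun x => by simp [sub_eq_add_neg])
        obtain ⟨x, hx⟩ := ((S18.Psi_tendsto.comp htend).eventually_lt_const hexppos).exists
        refine ⟨x, ?_⟩
        simp only [mem_setOf_eq]
        rw [hrep x h0]
        have hGu := S18.G_upper hm hv01 x x' (hspos h0) hvmono
        have hGlt : S18.G vplus x (Real.sqrt (2*t)) < Real.exp (-t) := by
          simp only [Function.comp_apply] at hx
          calc S18.G vplus x (Real.sqrt (2*t)) ≤ vplus x' + S18.Psi ((x - x')/Real.sqrt (2*t)) := hGu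
            _ < Real.exp (-t)/2 + Real.exp (-t)/2 := by exact add_lt_add hx' hx
            _ = Real.exp (-t) := by ring
        calc Real.exp t * S18.G vplus x (Real.sqrt (2*t)) < Real.exp t * Real.exp (-t) :=
              mul_lt_mul_of_pos_left hGlt (Real.exp_pos t)
          _ = 1 := by rw [← Real.exp_add]; simp
      · -- BddBelow
        have hlt1 : Real.exp (-t) < 1 := by
          rw [show (1:ℝ) = Real.exp 0 by simp]
          exact Real.exp_lt_exp.2 (by linarith)
        obtain ⟨a, ha⟩ := (S18.Psi_tendsto.eventually_lt_const (by linarith : (0:ℝ) < 1 - Real.exp (-t))).exists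
        set x₁ := sInf {x : ℝ | vplus x < 1} - Real.sqrt (2*t) * a with hx₁
        have hGlow := S18.G_lower hm hv01 hμleft x₁ (hspos h0)
        have haeq : (sInf {x : ℝ | vplus x < 1} - x₁) / Real.sqrt (2*t) = a := by
          rw [hx₁]; field_simp; ring
        rw [haeq] at hGlow
        have hu1 : 1 ≤ uPlusHeat vplus x₁ t := by
          rw [hrep x₁ h0]
          have h2 : Real.exp (-t) ≤ S18.G vplus x₁ (Real.sqrt (2*t)) := by linarith
          calc (1:ℝ) = Real.exp t * Real.exp (-t) := by rw [← Real.exp_add]; simp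
            _ ≤ Real.exp t * S18.G vplus x₁ (Real.sqrt (2*t)) :=
                mul_le_mul_of_nonneg_left h2 (Real.exp_pos t).le
        refine ⟨x₁, fun x hx => ?_⟩
        by_contra h
        push_neg at h
        have h3 : uPlusHeat vplus x₁ t ≤ uPlusHeat vplus x t := hanti ht h.le
        simp only [mem_setOf_eq] at hx
        linarith
  refine ⟨key, ?_⟩
  -- inf/characterization helpers
  have hle : ∀ {t y : ℝ}, 0 ≤ t → uPlusHeat vplus y t < 1 →
      sInf {x : ℝ | uPlusHeat vplus x t < 1} ≤ y :=
    fun {t y} ht hy => csInf_le (key t ht).2 hy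
  have hge : ∀ {t y : ℝ}, 0 ≤ t → 1 ≤ uPlusHeat vplus y t →
      y ≤ sInf {x : ℝ | uPlusHeat vplus x t < 1} := by
    intro t y ht hy
    apply le_csInf (key t ht).1
    intro x hx
    by_contra h
    push_neg at h
    have := hanti ht h.le
    simp only [mem_setOf_eq] at hx
    simp only at this
    linarith
  have hmem : ∀ {t : ℝ}, 0 ≤ t → ∀ y, sInf {x : ℝ | uPlusHeat vplus x t < 1} < y →
      uPlusHeat vplus y t < 1 := by
    intro t ht y hy
    obtain ⟨w, hw, hwy⟩ := exists_lt_of_csInf_lt (key t ht).1 hy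
    simp only [mem_setOf_eq] at hw
    exact lt_of_le_of_lt (hanti ht hwy.le) hw
  have hstrict : ∀ {t : ℝ}, 0 < t → ∀ y, y < sInf {x : ℝ | uPlusHeat vplus x t < 1} →
      1 < uPlusHeat vplus y t := by
    intro t ht y hy
    set m := sInf {x : ℝ | uPlusHeat vplus x t < 1} with hm'
    have hmid1 : 1 ≤ uPlusHeat vplus ((y + m)/2) t := by
      by_contra h
      push_neg at h
      have := hle ht.le h
      rw [← hm'] at this
      linarith
    have hlt : uPlusHeat vplus ((y + m)/2) t < uPlusHeat vplus y t := by
      rw [hrep _ ht, hrep _ ht]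
      exact mul_lt_mul_of_pos_left
        (S18.G_strict hm hv01 hvmono hμleft hμright (hspos ht) (by linarith)) (Real.exp_pos t)
    linarith
  have hcont : ∀ (x : ℝ) {t₀ : ℝ}, 0 < t₀ →
      ContinuousAt (fun t => uPlusHeat vplus x t) t₀ := by
    intro x t₀ ht₀
    have h1 : ContinuousAt (fun t : ℝ => Real.sqrt (2*t)) t₀ :=
      (Real.continuous_sqrt.comp (continuous_const.mul continuous_id)).continuousAt
    have h2 : ContinuousAt (fun s => S18.G vplus x s) (Real.sqrt (2*t₀)) :=
      S18.G_contAt hm hv01 hvmono x (hspos ht₀).ne'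
    have hGc : ContinuousAt (fun t : ℝ => S18.G vplus x (Real.sqrt (2*t))) t₀ := by
      have h3 : Tendsto (fun t : ℝ => Real.sqrt (2*t)) (𝓝 t₀) (𝓝 (Real.sqrt (2*t₀))) := h1
      have h4 : Tendsto (fun s => S18.G vplus x s) (𝓝 (Real.sqrt (2*t₀)))
          (𝓝 (S18.G vplus x (Real.sqrt (2*t₀)))) := h2
      exact h4.comp h3
    have hG : ContinuousAt (fun t : ℝ => Real.exp t * S18.G vplus x (Real.sqrt (2*t))) t₀ :=
      ContinuousAt.mul (Real.continuous_exp.continuousAt) hGc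
    have hev : (fun t => Real.exp t * S18.G vplus x (Real.sqrt (2*t))) =ᶠ[𝓝 t₀]
        (fun t => uPlusHeat vplus x t) := by
      filter_upwards [eventually_gt_nhds ht₀] with t htpos
      exact (hrep x htpos).symm
    have hT : Tendsto (fun t => uPlusHeat vplus x t) (𝓝 t₀)
        (𝓝 (Real.exp t₀ * S18.G vplus x (Real.sqrt (2*t₀)))) := Tendsto.congr' hev hG
    rw [show Real.exp t₀ * S18.G vplus x (Real.sqrt (2*t₀)) = uPlusHeat vplus x t₀ from
      (hrep x ht₀).symm] at hT
    exact hT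
  -- continuity
  intro t₀ ht₀
  rw [mem_Ici] at ht₀
  rcases eq_or_lt_of_le ht₀ with h0 | h0
  · -- t₀ = 0
    subst h0
    rw [ContinuousWithinAt]
    have hIci : (Ici (0:ℝ)) = {(0:ℝ)} ∪ Ioi 0 := by
      ext x
      simp only [mem_union, mem_singleton_iff, mem_Ioi, mem_Ici]
      constructor
      · intro h
        rcases eq_or_lt_of_le h with h | h
        · exact Or.inl h.symm
        · exact Or.inr h
      · rintro (rfl | h)
        · exact le_refl 0
        · exact h.le
    have hsplit : 𝓝[Ici (0:ℝ)] 0 = 𝓝[{(0:ℝ)}] 0 ⊔ 𝓝[Ioi (0:ℝ)] 0 := by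
      rw [hIci, nhdsWithin_union]
    rw [hsplit]
    set μ₀ := sInf {x : ℝ | uPlusHeat vplus x 0 < 1} with hμ₀
    have hμ₀v : μ₀ = sInf {x : ℝ | vplus x < 1} := by rw [hμ₀, hset0]
    apply tendsto_order.2
    constructor
    · intro a ha
      rw [eventually_sup]
      constructor
      · rw [nhdsWithin_singleton, eventually_pure]; exact ha
      · -- Lemma A
        set y := (a + μ₀)/2 with hy'
        have hyltμ : y < sInf {x : ℝ | vplus x < 1} := by rw [← hμ₀v, hy']; linarith
        have hδ : (0:ℝ) < sInf {x : ℝ | vplus x < 1} - y := by linarith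
        set δ := sInf {x : ℝ | vplus x < 1} - y with hδ'
        have hc : (0:ℝ) < δ^2/4 := by positivity
        have hA : ∀ᶠ t in 𝓝[>] (0:ℝ), 1 ≤ δ / Real.sqrt (2*t) :=
          (S18.a_tendsto hδ).eventually_ge_atTop 1
        have hE : ∀ᶠ t in 𝓝[>] (0:ℝ), Real.exp (-((δ^2/4)/t))/t < 1/2 :=
          (S18.tendsto_exp_div hc).eventually_lt_const (by norm_num)
        have ht1 : ∀ᶠ t in 𝓝[>] (0:ℝ), t < 1 :=
          Eventually.filter_mono nhdsWithin_le_nhds (eventually_lt_nhds one_pos)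
        filter_upwards [self_mem_nhdsWithin, hA, hE, ht1] with t htpos hA hE ht1
        rw [mem_Ioi] at htpos
        have hs := hspos htpos
        -- Psi bound
        have hPle := S18.Psi_le (δ / Real.sqrt (2*t)) (by linarith)
        have hsq : (δ / Real.sqrt (2*t))^2 = δ^2 / (2*t) := by
          rw [div_pow, Real.sq_sqrt (by linarith)]
        have hA2 : S18.Psi (δ / Real.sqrt (2*t)) ≤ Real.exp (-((δ^2/4)/t)) := by
          calc S18.Psi (δ / Real.sqrt (2*t))
              ≤ Real.exp (-((δ / Real.sqrt (2*t))^2)/2) / (δ / Real.sqrt (2*t)) := hPle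
            _ ≤ Real.exp (-((δ / Real.sqrt (2*t))^2)/2) / 1 := by
                apply div_le_div_of_nonneg_left (Real.exp_pos _).le one_pos hA
            _ = Real.exp (-((δ / Real.sqrt (2*t))^2)/2) := div_one _
            _ = Real.exp (-((δ^2/4)/t)) := by
                congr 1
                rw [hsq]
                ring
        have hEt : Real.exp (-((δ^2/4)/t)) < t/2 := by
          have := (div_lt_iff₀ htpos).1 hE
          linarith
        have hexp : 1 + t ≤ Real.exp t := by linarith [Real.add_one_le_exp t]
        have hGlow := S18.G_lower hm hv01 hμleft y hs
        rw [← hδ'] at hGlow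
        have hGb : 1 - t/2 ≤ S18.G vplus y (Real.sqrt (2*t)) := by linarith
        have hu1 : 1 ≤ uPlusHeat vplus y t := by
          rw [hrep y htpos]
          have h7 : (1+t) * (1 - t/2) ≤ Real.exp t * S18.G vplus y (Real.sqrt (2*t)) :=
            mul_le_mul hexp hGb (by linarith) (Real.exp_pos t).le
          nlinarith
        have := hge htpos.le hu1
        rw [hy'] at this
        linarith
    · intro b hb
      rw [eventually_sup]
      constructor
      · rw [nhdsWithin_singleton, eventually_pure]; exact hb
      · -- Lemma B
        set y := (μ₀ + b)/2 with hy'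
        have hyμ : sInf {x : ℝ | vplus x < 1} < y := by rw [← hμ₀v] at *; rw [hy']; linarith
        set x' := (sInf {x : ℝ | vplus x < 1} + y)/2 with hx''
        have hx'gt : sInf {x : ℝ | vplus x < 1} < x' := by rw [hx'']; linarith
        have hc' : vplus x' < 1 := hμright x' hx'gt
        have hd : (0:ℝ) < y - x' := by rw [hx'']; linarith
        have htd : Tendsto (fun t : ℝ => Real.exp t * (vplus x' + S18.Psi ((y - x') / Real.sqrt (2*t))))
            (𝓝[>] (0:ℝ)) (𝓝 (Real.exp 0 * (vplus x' + 0))) :=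
          Tendsto.mul ((Real.continuous_exp.tendsto 0).mono_left nhdsWithin_le_nhds)
            (tendsto_const_nhds.add (S18.Psi_tendsto.comp (S18.a_tendsto hd)))
        have hval : Real.exp 0 * (vplus x' + 0) < 1 := by simpa using hc'
        have hlt := htd.eventually_lt_const hval
        filter_upwards [self_mem_nhdsWithin, hlt] with t htpos hlt
        rw [mem_Ioi] at htpos
        have hGu := S18.G_upper hm hv01 y x' (hspos htpos) hvmono
        have huy : uPlusHeat vplus y t < 1 := by
          rw [hrep y htpos]
          calc Real.exp t * S18.G vplus y (Real.sqrt (2*t))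
              ≤ Real.exp t * (vplus x' + S18.Psi ((y - x') / Real.sqrt (2*t))) :=
                mul_le_mul_of_nonneg_left hGu (Real.exp_pos t).le
            _ < 1 := hlt
        have := hle htpos.le huy
        rw [hy'] at this
        linarith
  · -- t₀ > 0
    apply ContinuousAt.continuousWithinAt
    show Tendsto (fun t => sInf {x : ℝ | uPlusHeat vplus x t < 1}) (𝓝 t₀)
      (𝓝 (sInf {x : ℝ | uPlusHeat vplus x t₀ < 1}))
    apply tendsto_order.2
    constructor
    · intro a ha
      set m := sInf {x : ℝ | uPlusHeat vplus x t₀ < 1} with hm'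
      have h2 : 1 < uPlusHeat vplus ((a + m)/2) t₀ := hstrict h0 _ (by rw [← hm']; linarith)
      have h3 := (hcont ((a + m)/2) h0).eventually_const_lt h2
      filter_upwards [h3, eventually_gt_nhds h0] with t h4 h5
      have := hge h5.le h4.le
      linarith
    · intro b hb
      set m := sInf {x : ℝ | uPlusHeat vplus x t₀ < 1} with hm'
      have h2 : uPlusHeat vplus ((m + b)/2) t₀ < 1 := hmem h0.le _ (by rw [← hm']; linarith)
      have h3 := (hcont ((m + b)/2) h0).eventually_lt_const h2
      filter_upwards [h3, eventually_gt_nhds h0] with t h4 h5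
      have := hle h5.le h4
      linarith
end
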